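/- arXiv:2009.11272 — 6 statements merged into one kernel-verified Lean document; each statement's English description precedes it below -/
import Mathlib

section
/- Let X̄ be a symmetric positive semidefinite matrix with entrywise nonnegative entries, with eigendecomposition X̄ = P diag(λ₁,…,λ_r,0,…,0) Pᵀ where λ₁ ≥ … ≥ λ_r > 0 and P orthogonal, and let ℰ = {(i,j) : X̄_{ij} > 0, i ≤ j}. A necessary condition for the constraint nondegeneracy condition lin(T_{S₊ⁿ}(X̄)) + lin(T_{ℕⁿ}(X̄)) = Sⁿ to hold is (n−r)(n−r+1)/2 ≤ |ℰ|. -/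
open Matrix

variable {n : ℕ}

/-- Fill a symmetric matrix from values indexed by an upper-triangular support set. -/
def Sfill (E : Finset (Fin n × Fin n)) (f : ↥E → ℝ) : Matrix (Fin n) (Fin n) ℝ :=
  Matrix.of fun i j =>
    if h : (i, j) ∈ E then f ⟨(i, j), h⟩ else if h : (j, i) ∈ E then f ⟨(j, i), h⟩ else 0

lemma Sfill_add (E : Finset (Fin n × Fin n)) (f g : ↥E → ℝ) :
    Sfill E (f + g) = Sfill E f + Sfill E g := by
  ext i j
  by_cases h : (i, j) ∈ E <;> by_cases h' : (j, i) ∈ E <;> simp [Sfill, h, h']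

lemma Sfill_smul (E : Finset (Fin n × Fin n)) (c : ℝ) (f : ↥E → ℝ) :
    Sfill E (c • f) = c • Sfill E f := by
  ext i j
  by_cases h : (i, j) ∈ E <;> by_cases h' : (j, i) ∈ E <;> simp [Sfill, h, h']

/-- The linear map sending values on the support to the lower-right corner of `Pᵀ H P`. -/
def Lmap (r : ℕ) (P : Matrix (Fin n) (Fin n) ℝ) (E : Finset (Fin n × Fin n)) :
    (↥E → ℝ) →ₗ[ℝ] ({p : Fin n × Fin n // r ≤ (p.1 : ℕ) ∧ p.1 ≤ p.2} → ℝ) where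
  toFun f p := (Pᵀ * Sfill E f * P) p.1.1 p.1.2
  map_add' f g := by
    funext p
    simp [Sfill_add, Matrix.mul_add, Matrix.add_mul]
  map_smul' c f := by
    funext p
    simp [Sfill_smul, Matrix.mul_smul, Matrix.smul_mul]

lemma Sfill_eq (X : Matrix (Fin n) (Fin n) ℝ) (hnonneg : ∀ i j, 0 ≤ X i j) (hXsym : Xᵀ = X)
    (E : Finset (Fin n × Fin n))
    (hE : E = Finset.univ.filter (fun p : Fin n × Fin n => p.1 ≤ p.2 ∧ 0 < X p.1 p.2))
    (H : Matrix (Fin n) (Fin n) ℝ) (hH : Hᵀ = H)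
    (hz : ∀ i j, X i j = 0 → H i j = 0) :
    Sfill E (fun e => H e.1.1 e.1.2) = H := by
  ext i j
  by_cases h : (i, j) ∈ E
  · simp [Sfill, h]
  · by_cases h' : (j, i) ∈ E
    · have : Hᵀ i j = H i j := by rw [hH]
      simpa [Sfill, h, h'] using this.symm ▸ rfl
    · have hx : X i j = 0 := by
        rcases (hnonneg i j).lt_or_eq with hlt | heq
        · exfalso
          rcases le_total i j with hij | hij
          · exact h (by simp [hE, hij, hlt])
          · have : 0 < X j i := by
              have : Xᵀ j i = X j i := by rw [hXsym]
              simpa [Matrix.transpose_apply] using this ▸ hlt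
            exact h' (by simp [hE, hij, this])
        · exact heq.symm
      simp [Sfill, h, h', hz i j hx]

/-- Corner index equivalence. -/
def cornerEquiv (n r : ℕ) :
    {p : Fin (n - r) × Fin (n - r) // p.1 ≤ p.2} ≃
      {p : Fin n × Fin n // r ≤ (p.1 : ℕ) ∧ p.1 ≤ p.2} where
  toFun q := ⟨(⟨q.1.1 + r, by have := q.1.1.isLt; omega⟩, ⟨q.1.2 + r, by have := q.1.2.isLt; omega⟩),
    by
      have hq := q.2
      rw [Fin.le_def] at hq
      exact ⟨by simp, by rw [Fin.le_def]; simpa using Nat.add_le_add_right hq r⟩⟩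
  invFun q := ⟨(⟨q.1.1 - r, by have := q.1.1.isLt; have := q.2.1; omega⟩,
      ⟨q.1.2 - r, by have := q.1.2.isLt; have := q.2.1; have hq := q.2.2; rw [Fin.le_def] at hq; omega⟩),
    by
      have hq := q.2.2
      have h1 := q.2.1
      rw [Fin.le_def] at hq ⊢
      simp only
      omega⟩
  left_inv q := by
    apply Subtype.ext
    apply Prod.ext <;> apply Fin.ext <;> simp
  right_inv q := by
    apply Subtype.ext
    have h1 := q.2.1
    apply Prod.ext <;> apply Fin.ext <;> simp <;> omega

/-- A necessary condition for constraint nondegeneracy of the DNN projection problem: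
if `lin(T_{S₊ⁿ}(X̄)) + lin(T_{ℕⁿ}(X̄)) = Sⁿ`, then `(n−r)(n−r+1)/2 ≤ |ℰ|`, where `r` is the
rank of `X̄` and `ℰ` is the set of upper-triangular positions of strictly positive entries. -/
theorem necessary_condition_constraint_nondegeneracy
    (n : ℕ) (X : Matrix (Fin n) (Fin n) ℝ)
    (hpsd : X.PosSemidef) (hnonneg : ∀ i j, 0 ≤ X i j)
    (P : Matrix (Fin n) (Fin n) ℝ) (hP : Pᵀ * P = 1)
    (d : Fin n → ℝ) (r : ℕ) (hrn : r ≤ n)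
    (hdecomp : X = P * Matrix.diagonal d * Pᵀ)
    (hpos : ∀ i : Fin n, (i : ℕ) < r → 0 < d i)
    (hzero : ∀ i : Fin n, r ≤ (i : ℕ) → d i = 0)
    (hmono : ∀ i j : Fin n, i ≤ j → d j ≤ d i)
    (E : Finset (Fin n × Fin n))
    (hE : E = Finset.univ.filter (fun p : Fin n × Fin n => p.1 ≤ p.2 ∧ 0 < X p.1 p.2))
    -- constraint nondegeneracy: lin(T_{S₊ⁿ}(X̄)) + lin(T_{ℕⁿ}(X̄)) = Sⁿ
    (hcn : ∀ Y : Matrix (Fin n) (Fin n) ℝ, Yᵀ = Y →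
      ∃ H₁ H₂ : Matrix (Fin n) (Fin n) ℝ,
        H₁ᵀ = H₁ ∧
        (∀ i j : Fin n, r ≤ (i : ℕ) → r ≤ (j : ℕ) → (Pᵀ * H₁ * P) i j = 0) ∧
        H₂ᵀ = H₂ ∧
        (∀ i j : Fin n, X i j = 0 → H₂ i j = 0) ∧
        Y = H₁ + H₂) :
    (n - r) * (n - r + 1) / 2 ≤ E.card := by
  have hXsym : Xᵀ = X := by
    rw [hdecomp]
    simp [Matrix.transpose_mul, Matrix.mul_assoc]
  -- surjectivity of the linear map
  have hsurj : Function.Surjective (Lmap r P E) := by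
    intro g
    -- build the corner matrix M
    set M : Matrix (Fin n) (Fin n) ℝ := Matrix.of fun i j =>
      if h : r ≤ (i : ℕ) ∧ i ≤ j then g ⟨(i, j), h⟩
      else if h : r ≤ (j : ℕ) ∧ j ≤ i then g ⟨(j, i), h⟩ else 0 with hM
    have hMsym : Mᵀ = M := by
      ext i j
      show M j i = M i j
      by_cases h1 : r ≤ (j : ℕ) ∧ j ≤ i
      · by_cases h2 : r ≤ (i : ℕ) ∧ i ≤ j
        · have hij : i = j := le_antisymm h2.2 h1.2
          subst hij; rfl
        · simp [hM, h1, h2]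
      · by_cases h2 : r ≤ (i : ℕ) ∧ i ≤ j
        · simp [hM, h1, h2]
        · simp [hM, h1, h2]
    have hY : (P * M * Pᵀ)ᵀ = P * M * Pᵀ := by
      simp [Matrix.transpose_mul, hMsym, Matrix.mul_assoc]
    obtain ⟨H₁, H₂, hs1, hc1, hs2, hz2, hYsum⟩ := hcn (P * M * Pᵀ) hY
    refine ⟨fun e => H₂ e.1.1 e.1.2, ?_⟩
    funext p
    have hSf : Sfill E (fun e => H₂ e.1.1 e.1.2) = H₂ :=
      Sfill_eq X hnonneg hXsym E hE H₂ hs2 hz2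
    have hPMP : Pᵀ * (P * M * Pᵀ) * P = M := by
      calc Pᵀ * (P * M * Pᵀ) * P = (Pᵀ * P) * M * (Pᵀ * P) := by
            simp only [Matrix.mul_assoc]
          _ = M := by rw [hP]; simp
    have hH2 : Pᵀ * H₂ * P = M - Pᵀ * H₁ * P := by
      have : Pᵀ * (H₁ + H₂) * P = M := by rw [← hYsum, hPMP]
      rw [Matrix.mul_add, Matrix.add_mul] at this
      rw [← this]; abel
    have hp2 : r ≤ (p.1.2 : ℕ) := le_trans p.2.1 (Fin.le_def.mp p.2.2)
    show (Pᵀ * Sfill E (fun e => H₂ e.1.1 e.1.2) * P) p.1.1 p.1.2 = g p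
    rw [hSf, hH2]
    have h0 : (Pᵀ * H₁ * P) p.1.1 p.1.2 = 0 := hc1 p.1.1 p.1.2 p.2.1 hp2
    have hMval : M p.1.1 p.1.2 = g p := by
      have hcond : r ≤ (p.1.1 : ℕ) ∧ p.1.1 ≤ p.1.2 := p.2
      simp only [hM, Matrix.of_apply, dif_pos hcond]
    simp [Matrix.sub_apply, h0, hMval]
  -- finrank chain
  have h1 : Module.finrank ℝ ({p : Fin n × Fin n // r ≤ (p.1 : ℕ) ∧ p.1 ≤ p.2} → ℝ) ≤
      Module.finrank ℝ (↥E → ℝ) := by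
    have hle := LinearMap.finrank_range_le (Lmap r P E)
    rwa [LinearMap.range_eq_top.mpr hsurj, finrank_top] at hle
  rw [Module.finrank_fintype_fun_eq_card, Module.finrank_fintype_fun_eq_card,
    Fintype.card_coe] at h1
  -- cardinality of the corner index set
  have hcard : Fintype.card {p : Fin n × Fin n // r ≤ (p.1 : ℕ) ∧ p.1 ≤ p.2} =
      (n - r) * (n - r + 1) / 2 := by
    rw [← Fintype.card_congr (cornerEquiv n r),
      ← Fintype.card_congr (Sym2.sortEquiv (α := Fin (n - r))), Sym2.card]
    rw [Fintype.card_fin, Nat.choose_two_right]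
    simp [Nat.mul_comm]
  omega
end

section
/- Consider the problem of minimizing θ(x) = h(Fx) + ⟨c, x⟩ + p(x) over x ∈ X, where h is differentiable convex, p is closed proper convex, and F is linear. Then Fx is constant over the optimal solution set: if x' and x'' are both minimizers of θ, then Fx' = Fx''. -/
open scoped RealInnerProductSpace

/-- For `θ(x) = h(Fx) + ⟨c,x⟩ + p(x)` with `h` differentiable strictly convex,
`p` proper closed convex (extended-real-valued) and `F` linear, the value `Fx` is
invariant over the set of minimizers of `θ`. -/
theorem Fx_invariant_over_minimizers
    {X W : Type*} [NormedAddCommGroup X] [InnerProductSpace ℝ X] [FiniteDimensional ℝ X]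
    [NormedAddCommGroup W] [InnerProductSpace ℝ W] [FiniteDimensional ℝ W]
    (F : X →ₗ[ℝ] W) (c : X)
    (h : W → ℝ) (hdiff : Differentiable ℝ h)
    (hstrict : StrictConvexOn ℝ Set.univ h)
    (p : X → EReal)
    (hpconv : ∀ x y : X, ∀ a b : ℝ, 0 ≤ a → 0 ≤ b → a + b = 1 →
      p (a • x + b • y) ≤ (a : EReal) * p x + (b : EReal) * p y)
    (hplsc : LowerSemicontinuous p)
    (hpproper : ∀ x, p x ≠ ⊥)
    (θ : X → EReal)
    (hθ : ∀ x, θ x = ((h (F x) + ⟪c, x⟫ : ℝ) : EReal) + p x)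
    (x' x'' : X)
    (hx'min : θ x' ≠ ⊤ ∧ ∀ y, θ x' ≤ θ y)
    (hx''min : θ x'' ≠ ⊤ ∧ ∀ y, θ x'' ≤ θ y) :
    F x' = F x'' := by

  by_contra hne
  -- the two optimal values agree
  have hval : θ x' = θ x'' := le_antisymm (hx'min.2 x'') (hx''min.2 x')
  -- p is finite at minimizers
  have hpt' : p x' ≠ ⊤ := by
    intro htop
    apply hx'min.1
    rw [hθ x', htop]
    rfl
  have hpt'' : p x'' ≠ ⊤ := by
    intro htop
    apply hx''min.1
    rw [hθ x'', htop]
    rfl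
  set r' : ℝ := (p x').toReal with hr'
  set r'' : ℝ := (p x'').toReal with hr''
  have hpr' : p x' = (r' : EReal) := (EReal.coe_toReal hpt' (hpproper x')).symm
  have hpr'' : p x'' = (r'' : EReal) := (EReal.coe_toReal hpt'' (hpproper x'')).symm
  set A' : ℝ := h (F x') + ⟪c, x'⟫ + r' with hA'
  set A'' : ℝ := h (F x'') + ⟪c, x''⟫ + r'' with hA''
  have hθ' : θ x' = (A' : EReal) := by
    rw [hθ x', hpr', hA', EReal.coe_add]; norm_cast
  have hθ'' : θ x'' = (A'' : EReal) := by
    rw [hθ x'', hpr'', hA'', EReal.coe_add]; norm_cast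
  have hAA : A' = A'' := by
    have := hθ' ▸ hθ'' ▸ hval
    exact_mod_cast this
  set m : X := (1/2 : ℝ) • x' + (1/2 : ℝ) • x''
  -- strict convexity of h
  have hh : h (F m) < (1/2) * h (F x') + (1/2) * h (F x'') := by
    have hFm : F m = (1/2 : ℝ) • F x' + (1/2 : ℝ) • F x'' := by
      simp [m, map_add, map_smul]
    rw [hFm]
    exact hstrict.2 (Set.mem_univ _) (Set.mem_univ _) hne (by norm_num) (by norm_num)
      (by norm_num)
  have hinner : ⟪c, m⟫ = (1/2) * ⟪c, x'⟫ + (1/2) * ⟪c, x''⟫ := by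
    simp [m, inner_add_right, inner_smul_right]
  have hpm : p m ≤ (((1/2) * r' + (1/2) * r'' : ℝ) : EReal) := by
    have := hpconv x' x'' (1/2) (1/2) (by norm_num) (by norm_num) (by norm_num)
    rw [hpr', hpr''] at this
    calc p m ≤ ((1/2 : ℝ) : EReal) * (r' : EReal) + ((1/2 : ℝ) : EReal) * (r'' : EReal) :=
          this
      _ = (((1/2) * r' + (1/2) * r'' : ℝ) : EReal) := by
          rw [EReal.coe_add, EReal.coe_mul, EReal.coe_mul]
  have hlt : θ m < θ x' := by
    rw [hθ m, hθ']
    calc ((h (F m) + ⟪c, m⟫ : ℝ) : EReal) + p m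
        ≤ ((h (F m) + ⟪c, m⟫ : ℝ) : EReal) + (((1/2) * r' + (1/2) * r'' : ℝ) : EReal) := by
          exact add_le_add (le_refl _) hpm
      _ = ((h (F m) + ⟪c, m⟫ + ((1/2) * r' + (1/2) * r'') : ℝ) : EReal) := by
          rw [EReal.coe_add]; norm_cast
      _ < (A' : EReal) := by
          rw [EReal.coe_lt_coe_iff]
          have : A' = (1/2) * A' + (1/2) * A'' := by rw [← hAA]; ring
          rw [this, hA', hA'', hinner]
          nlinarith [hh]
  exact absurd (hx'min.2 m) (not_le.mpr hlt)
end

section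
/- Let θ : H → (−∞, +∞] be proper lower semicontinuous convex on a Hilbert space, and (x̄, v̄) ∈ gph(∂θ). If there exist κ > 0 and ε > 0 such that θ(x) ≥ θ(x̄) + ⟨v̄, x − x̄⟩ + κ·dist²(x, (∂θ)⁻¹(v̄)) for all x with ‖x − x̄‖ ≤ ε, then ∂θ is metrically subregular at x̄ for v̄, i.e., there exist κ' > 0, ε' > 0 with dist(x, (∂θ)⁻¹(v̄)) ≤ κ'·dist(v̄, ∂θ(x)) for all x ∈ B_{ε'}(x̄). -/
open scoped RealInnerProductSpace

/-- The convex subdifferential of an extended-real-valued function. -/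
def subdiff {H : Type*} [NormedAddCommGroup H] [InnerProductSpace ℝ H]
    (θ : H → EReal) (x : H) : Set H :=
  {v | ∀ y, θ x + ((⟪v, y - x⟫ : ℝ) : EReal) ≤ θ y}

lemma finite_of_mem_subdiff {H : Type*} [NormedAddCommGroup H] [InnerProductSpace ℝ H]
    (θ : H → EReal) {x v : H} (hv : v ∈ subdiff θ x)
    (hproper_top : ∃ y, θ y ≠ ⊤) : θ x ≠ ⊤ := by
  obtain ⟨y, hy⟩ := hproper_top
  intro h
  have := hv y
  rw [h] at this
  simp only [EReal.top_add_coe, top_le_iff] at this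
  exact hy this

/-- Quadratic growth implies metric subregularity of the subdifferential of a proper
lower semicontinuous convex function on a real Hilbert space: if
`θ(x) ≥ θ(xb) + ⟨vb, x − xb⟩ + κ dist²(x, (∂θ)⁻¹(vb))` near `xb`, then `∂θ` is metrically
subregular at `xb` for `vb`, i.e., `dist(x, (∂θ)⁻¹(vb)) ≤ κ' dist(vb, ∂θ(x))` near `xb`. -/
theorem quadratic_growth_implies_metric_subregularity
    {H : Type*} [NormedAddCommGroup H] [InnerProductSpace ℝ H] [CompleteSpace H]
    (θ : H → EReal)
    (hconv : ∀ x y : H, ∀ a b : ℝ, 0 ≤ a → 0 ≤ b → a + b = 1 →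
      θ (a • x + b • y) ≤ (a : EReal) * θ x + (b : EReal) * θ y)
    (hlsc : LowerSemicontinuous θ)
    (hproper_bot : ∀ x, θ x ≠ ⊥) (hproper_top : ∃ x, θ x ≠ ⊤)
    (xb vb : H) (hgph : vb ∈ subdiff θ xb)
    (S : Set H) (hS : S = {x | vb ∈ subdiff θ x})
    (hgrowth : ∃ κ > (0 : ℝ), ∃ ε > (0 : ℝ), ∀ x : H, ‖x - xb‖ ≤ ε →
      θ xb + (((⟪vb, x - xb⟫ + κ * (Metric.infDist x S) ^ 2 : ℝ)) : EReal) ≤ θ x) :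
    ∃ κ' > (0 : ℝ), ∃ ε' > (0 : ℝ), ∀ x : H, ‖x - xb‖ ≤ ε' →
      ∀ v ∈ subdiff θ x, Metric.infDist x S ≤ κ' * ‖vb - v‖ := by
  obtain ⟨κ, hκ, ε, hε, hgr⟩ := hgrowth
  refine ⟨1/κ, by positivity, ε, hε, ?_⟩
  intro x hx v hv
  have hSne : S.Nonempty := ⟨xb, by rw [hS]; exact hgph⟩
  set d := Metric.infDist x S with hd
  have hd0 : 0 ≤ d := Metric.infDist_nonneg
  -- finiteness of values
  have hxtop : θ x ≠ ⊤ := finite_of_mem_subdiff θ hv hproper_top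
  have hxbtop : θ xb ≠ ⊤ := finite_of_mem_subdiff θ hgph hproper_top
  have hxeq : θ x = ((θ x).toReal : EReal) := (EReal.coe_toReal hxtop (hproper_bot x)).symm
  have hxbeq : θ xb = ((θ xb).toReal : EReal) :=
    (EReal.coe_toReal hxbtop (hproper_bot xb)).symm
  set a := (θ x).toReal
  set c := (θ xb).toReal
  -- key estimate
  have key : ∀ δ > (0:ℝ), κ * d ^ 2 ≤ ‖vb - v‖ * (d + δ) := by
    intro δ hδ
    obtain ⟨s, hsS, hsd⟩ := (Metric.infDist_lt_iff hSne).mp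
      (by linarith : Metric.infDist x S < d + δ)
    have hsmem : vb ∈ subdiff θ s := by rw [hS] at hsS; exact hsS
    have hstop : θ s ≠ ⊤ := finite_of_mem_subdiff θ hsmem hproper_top
    have hseq : θ s = ((θ s).toReal : EReal) := (EReal.coe_toReal hstop (hproper_bot s)).symm
    set b := (θ s).toReal
    -- three real inequalities
    have h1 : c + (⟪vb, x - xb⟫ + κ * d ^ 2) ≤ a := by
      have := hgr x hx
      rw [hxeq, hxbeq, ← EReal.coe_add, EReal.coe_le_coe_iff] at this
      exact this
    have h2 : b + ⟪vb, xb - s⟫ ≤ c := by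
      have := hsmem xb
      rw [hseq, hxbeq, ← EReal.coe_add, EReal.coe_le_coe_iff] at this
      exact this
    have h3 : a + ⟪v, s - x⟫ ≤ b := by
      have := hv s
      rw [hxeq, hseq, ← EReal.coe_add, EReal.coe_le_coe_iff] at this
      exact this
    have hinner : κ * d ^ 2 ≤ ⟪vb - v, s - x⟫ := by
      simp only [inner_sub_left, inner_sub_right] at h1 h2 h3 ⊢
      linarith
    have hbound : ⟪vb - v, s - x⟫ ≤ ‖vb - v‖ * ‖s - x‖ := real_inner_le_norm _ _
    have hns : ‖s - x‖ ≤ d + δ := by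
      rw [← dist_eq_norm, dist_comm]
      exact le_of_lt hsd
    calc κ * d ^ 2 ≤ ‖vb - v‖ * ‖s - x‖ := le_trans hinner hbound
      _ ≤ ‖vb - v‖ * (d + δ) := by
          exact mul_le_mul_of_nonneg_left hns (norm_nonneg _)
  have key' : κ * d ^ 2 ≤ ‖vb - v‖ * d := by
    refine le_of_forall_pos_le_add ?_
    intro η hη
    rcases eq_or_lt_of_le (norm_nonneg (vb - v)) with h0 | h0
    · have := key 1 one_pos
      rw [← h0] at this ⊢
      linarith
    · have := key (η / ‖vb - v‖) (by positivity)
      rw [mul_add, mul_div_cancel₀ _ (ne_of_gt h0)] at this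
      linarith
  rcases eq_or_lt_of_le hd0 with h0 | h0
  · rw [← h0]
    positivity
  · have : κ * d ≤ ‖vb - v‖ := by
      have := key'
      nlinarith
    rw [div_mul_eq_mul_div, le_div_iff₀ hκ, one_mul] at *
    linarith
end

section
/- Let S̄, X̄ be n×n symmetric PSD matrices with ⟨X̄, S̄⟩ = 0. Then the normal cone N_{S₊ⁿ}(S̄) is a polyhedral set if and only if rank(S̄) ≥ n − 1. -/
open Matrix

/-- A set is polyhedral if it is the intersection of finitely many half-spaces. -/
def IsPolyhedral {E : Type*} [AddCommGroup E] [Module ℝ E] (s : Set E) : Prop :=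
  ∃ (k : ℕ) (f : Fin k → (E →ₗ[ℝ] ℝ)) (b : Fin k → ℝ),
    s = {x | ∀ i, f i x ≤ b i}


lemma trace_transpose_mul_self_nonneg {n : ℕ} (M : Matrix (Fin n) (Fin n) ℝ) :
    0 ≤ Matrix.trace (Mᵀ * M) := by
  simp only [Matrix.trace, Matrix.diag, Matrix.mul_apply, Matrix.transpose_apply]
  exact Finset.sum_nonneg fun i _ => Finset.sum_nonneg fun j _ => mul_self_nonneg _

lemma eq_zero_of_trace_transpose_mul_self {n : ℕ} (M : Matrix (Fin n) (Fin n) ℝ)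
    (h : Matrix.trace (Mᵀ * M) = 0) : M = 0 := by
  simp only [Matrix.trace, Matrix.diag, Matrix.mul_apply, Matrix.transpose_apply] at h
  ext i j
  have h1 : ∀ k ∈ Finset.univ, (0:ℝ) ≤ ∑ l, M l k * M l k :=
    fun k _ => Finset.sum_nonneg fun l _ => mul_self_nonneg _
  have h2 := (Finset.sum_eq_zero_iff_of_nonneg h1).mp h j (Finset.mem_univ _)
  have h3 : ∀ l ∈ Finset.univ, (0:ℝ) ≤ M l j * M l j := fun l _ => mul_self_nonneg _
  have := (Finset.sum_eq_zero_iff_of_nonneg h3).mp h2 i (Finset.mem_univ _)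
  simpa [mul_self_eq_zero] using this

lemma psd_trans {n : ℕ} {A : Matrix (Fin n) (Fin n) ℝ} (hA : A.PosSemidef) :
    ∃ B : Matrix (Fin n) (Fin n) ℝ, A = Bᵀ * B := by
  open scoped MatrixOrder in
  obtain ⟨B, hB⟩ := CStarAlgebra.nonneg_iff_eq_star_mul_self.mp hA.nonneg
  exact ⟨B, by rwa [Matrix.star_eq_conjTranspose, Matrix.conjTranspose_eq_transpose_of_trivial] at hB⟩

lemma trace_key {n : ℕ} (C D : Matrix (Fin n) (Fin n) ℝ) :
    Matrix.trace (Cᵀ * C * (Dᵀ * D)) = Matrix.trace ((D * Cᵀ)ᵀ * (D * Cᵀ)) := by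
  rw [Matrix.trace_mul_comm (Cᵀ * C) (Dᵀ * D), Matrix.transpose_mul,
    Matrix.transpose_transpose]
  calc Matrix.trace (Dᵀ * D * (Cᵀ * C)) = Matrix.trace (Dᵀ * (D * Cᵀ * C)) := by
        rw [show Dᵀ * D * (Cᵀ * C) = Dᵀ * (D * Cᵀ * C) by noncomm_ring]
    _ = Matrix.trace ((D * Cᵀ * C) * Dᵀ) := Matrix.trace_mul_comm _ _
    _ = Matrix.trace ((D * Cᵀ) * (C * Dᵀ)) := by
        rw [show D * Cᵀ * C * Dᵀ = (D * Cᵀ) * (C * Dᵀ) by noncomm_ring]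
    _ = Matrix.trace (C * Dᵀ * (D * Cᵀ)) := Matrix.trace_mul_comm _ _

lemma trace_mul_psd_nonneg {n : ℕ} {A B : Matrix (Fin n) (Fin n) ℝ}
    (hA : A.PosSemidef) (hB : B.PosSemidef) : 0 ≤ Matrix.trace (A * B) := by
  obtain ⟨C, rfl⟩ := psd_trans hA
  obtain ⟨D, rfl⟩ := psd_trans hB
  rw [trace_key]
  exact trace_transpose_mul_self_nonneg _

lemma mul_eq_zero_of_trace_mul_psd {n : ℕ} {A B : Matrix (Fin n) (Fin n) ℝ}
    (hA : A.PosSemidef) (hB : B.PosSemidef) (h : Matrix.trace (A * B) = 0) : A * B = 0 := by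
  obtain ⟨C, rfl⟩ := psd_trans hA
  obtain ⟨D, rfl⟩ := psd_trans hB
  rw [trace_key] at h
  have h0 : D * Cᵀ = 0 := eq_zero_of_trace_transpose_mul_self _ h
  have h1 : C * Dᵀ = 0 := by
    have := congrArg Matrix.transpose h0
    simpa using this
  calc Cᵀ * C * (Dᵀ * D) = Cᵀ * (C * Dᵀ) * D := by noncomm_ring
  _ = 0 := by rw [h1]; simp

section helpers
variable {n : ℕ}

lemma vecMulVec_mulVec' (u v x : Fin n → ℝ) :
    Matrix.vecMulVec u v *ᵥ x = (v ⬝ᵥ x) • u := by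
  ext i
  simp only [Matrix.mulVec, Matrix.vecMulVec_apply, dotProduct, Pi.smul_apply, smul_eq_mul,
    Finset.mul_sum, Finset.sum_mul]
  congr 1; ext j; ring

lemma trace_vecMulVec_mul (u v : Fin n → ℝ) (A : Matrix (Fin n) (Fin n) ℝ) :
    Matrix.trace (Matrix.vecMulVec u v * A) = v ⬝ᵥ (A *ᵥ u) := by
  simp only [Matrix.trace, Matrix.diag, Matrix.mul_apply, Matrix.vecMulVec_apply,
    dotProduct, Matrix.mulVec, Finset.mul_sum]
  rw [Finset.sum_comm]
  congr 1; ext j; congr 1; ext i; ring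

lemma posSemidef_vecMulVec_self (u : Fin n → ℝ) : (Matrix.vecMulVec u u).PosSemidef := by
  refine Matrix.PosSemidef.of_dotProduct_mulVec_nonneg ?_ ?_
  · ext i j
    simp [Matrix.conjTranspose_apply, Matrix.vecMulVec_apply, mul_comm]
  · intro x
    rw [vecMulVec_mulVec']
    simp only [star_trivial, dotProduct_smul]
    rw [smul_eq_mul, dotProduct_comm]
    exact mul_self_nonneg _

end helpers
lemma memN_iff {n : ℕ} (Sb : Matrix (Fin n) (Fin n) ℝ) (hS : Sb.PosSemidef)
    (H : Matrix (Fin n) (Fin n) ℝ) :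
    (Hᵀ = H ∧ ∀ S : Matrix (Fin n) (Fin n) ℝ, S.PosSemidef →
      Matrix.trace (Hᵀ * (S - Sb)) ≤ 0) ↔
    (Hᵀ = H ∧ (-H).PosSemidef ∧ Sb * H = 0) := by
  constructor
  · rintro ⟨hsym, hall⟩
    have hherm : (-H).IsHermitian := by
      rw [Matrix.IsHermitian, Matrix.conjTranspose_neg,
        Matrix.conjTranspose_eq_transpose_of_trivial, hsym]
    have hpsd : (-H).PosSemidef := by
      refine Matrix.PosSemidef.of_dotProduct_mulVec_nonneg hherm (fun x => ?_)
      have hmem := hall (Sb + Matrix.vecMulVec x x) (hS.add (posSemidef_vecMulVec_self x))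
      rw [hsym, add_sub_cancel_left] at hmem
      have htr : Matrix.trace (H * Matrix.vecMulVec x x) = x ⬝ᵥ (H *ᵥ x) := by
        rw [Matrix.trace_mul_comm, trace_vecMulVec_mul]
      rw [htr] at hmem
      have : (-H) *ᵥ x = -(H *ᵥ x) := by rw [Matrix.neg_mulVec]
      rw [star_trivial, this, dotProduct_neg]
      linarith
    refine ⟨hsym, hpsd, ?_⟩
    have h1 : Matrix.trace (H * Sb) ≤ 0 := by
      have := hall (Sb + Sb) (hS.add hS)
      rwa [hsym, add_sub_cancel_right] at this
    have h2 : 0 ≤ Matrix.trace (H * Sb) := by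
      have := hall 0 (Matrix.PosSemidef.zero)
      rw [hsym, zero_sub, Matrix.mul_neg, Matrix.trace_neg] at this
      linarith
    have h3 : Matrix.trace (Sb * (-H)) = 0 := by
      rw [Matrix.trace_mul_comm, Matrix.neg_mul, Matrix.trace_neg]
      linarith
    have h4 := mul_eq_zero_of_trace_mul_psd hS hpsd h3
    have : Sb * H = -(Sb * (-H)) := by rw [Matrix.mul_neg, neg_neg]
    rw [this, h4, neg_zero]
  · rintro ⟨hsym, hpsd, hmul⟩
    refine ⟨hsym, fun S hSpsd => ?_⟩
    have htrSb : Matrix.trace (H * Sb) = 0 := by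
      rw [Matrix.trace_mul_comm, hmul, Matrix.trace_zero]
    have h5 : 0 ≤ Matrix.trace ((-H) * S) := trace_mul_psd_nonneg hpsd hSpsd
    rw [Matrix.neg_mul, Matrix.trace_neg] at h5
    rw [hsym, Matrix.mul_sub, Matrix.trace_sub, htrSb]
    linarith


lemma isPolyhedral_of_finite {E : Type*} [AddCommGroup E] [Module ℝ E]
    {ι : Type*} [Fintype ι] (f : ι → (E →ₗ[ℝ] ℝ)) (b : ι → ℝ) :
    IsPolyhedral {x | ∀ i, f i x ≤ b i} := by
  let e := Fintype.equivFin ι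
  refine ⟨Fintype.card ι, fun k => f (e.symm k), fun k => b (e.symm k), ?_⟩
  ext x
  constructor
  · intro h k; exact h _
  · intro h i
    have := h (e i)
    simpa using this

@[simps]
def entryLin (n : ℕ) (i j : Fin n) : Matrix (Fin n) (Fin n) ℝ →ₗ[ℝ] ℝ where
  toFun M := M i j
  map_add' := fun _ _ => rfl
  map_smul' := fun _ _ => rfl

lemma singleton_zero_polyhedral (n : ℕ) :
    IsPolyhedral ({0} : Set (Matrix (Fin n) (Fin n) ℝ)) := by
  have : ({0} : Set (Matrix (Fin n) (Fin n) ℝ)) =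
      {x | ∀ p : Fin n × Fin n × Bool,
        (if p.2.2 then entryLin n p.1 p.2.1 else -entryLin n p.1 p.2.1) x ≤ 0} := by
    ext x
    simp only [Set.mem_singleton_iff, Set.mem_setOf_eq]
    constructor
    · rintro rfl p
      cases p.2.2 <;> simp [entryLin_apply]
    · intro h
      ext i j
      have h1 := h (i, j, true)
      have h2 := h (i, j, false)
      simp [entryLin_apply] at h1 h2
      simp only [Matrix.zero_apply]
      linarith
  rw [this]
  exact isPolyhedral_of_finite _ _

lemma ray_polyhedral (n : ℕ) (M₀ : Matrix (Fin n) (Fin n) ℝ) (i₀ j₀ : Fin n)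
    (hM : M₀ i₀ j₀ < 0) :
    IsPolyhedral {X : Matrix (Fin n) (Fin n) ℝ | ∃ t : ℝ, 0 ≤ t ∧ X = t • M₀} := by
  classical
  let g : (Fin n × Fin n × Bool) ⊕ Unit → (Matrix (Fin n) (Fin n) ℝ →ₗ[ℝ] ℝ) :=
    fun p => match p with
    | Sum.inl (i, j, true) => M₀ i₀ j₀ • entryLin n i j - M₀ i j • entryLin n i₀ j₀
    | Sum.inl (i, j, false) => -(M₀ i₀ j₀ • entryLin n i j - M₀ i j • entryLin n i₀ j₀)
    | Sum.inr _ => entryLin n i₀ j₀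
  have : {X : Matrix (Fin n) (Fin n) ℝ | ∃ t : ℝ, 0 ≤ t ∧ X = t • M₀} =
      {x | ∀ p, g p x ≤ 0} := by
    ext X
    simp only [Set.mem_setOf_eq]
    constructor
    · rintro ⟨t, ht, rfl⟩ p
      rcases p with ⟨i, j, b⟩ | u
      · cases b <;>
          · simp only [g, LinearMap.sub_apply, LinearMap.smul_apply, LinearMap.neg_apply,
              entryLin_apply, LinearMap.coe_mk, AddHom.coe_mk, Matrix.smul_apply, smul_eq_mul]
            ring_nf
            exact le_refl 0
      · simp only [g, entryLin_apply, LinearMap.coe_mk, AddHom.coe_mk, Matrix.smul_apply, smul_eq_mul]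
        exact mul_nonpos_of_nonneg_of_nonpos ht hM.le
    · intro h
      refine ⟨X i₀ j₀ / M₀ i₀ j₀, ?_, ?_⟩
      · have hx : X i₀ j₀ ≤ 0 := by
          have := h (Sum.inr ())
          simpa [g, entryLin_apply] using this
        exact div_nonneg_iff.mpr (Or.inr ⟨hx, hM.le⟩)
      · ext i j
        have h1 := h (Sum.inl (i, j, true))
        have h2 := h (Sum.inl (i, j, false))
        simp only [g, LinearMap.sub_apply, LinearMap.smul_apply, LinearMap.neg_apply,
          entryLin_apply, LinearMap.coe_mk, AddHom.coe_mk, smul_eq_mul, neg_nonpos, neg_sub] at h1 h2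
        have heq : M₀ i₀ j₀ * X i j = M₀ i j * X i₀ j₀ := by linarith
        have hne : M₀ i₀ j₀ ≠ 0 := ne_of_lt hM
        simp only [Matrix.smul_apply, smul_eq_mul]
        field_simp
        linear_combination heq
  rw [this]
  exact isPolyhedral_of_finite _ _

lemma backward_dir (n : ℕ) (Sb : Matrix (Fin n) (Fin n) ℝ) (hS : Sb.PosSemidef)
    (N : Set (Matrix (Fin n) (Fin n) ℝ))
    (hN : N = {H | Hᵀ = H ∧ ∀ S : Matrix (Fin n) (Fin n) ℝ, S.PosSemidef →
      Matrix.trace (Hᵀ * (S - Sb)) ≤ 0})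
    (hr : n - 1 ≤ Sb.rank) : IsPolyhedral N := by
  classical
  set K := LinearMap.ker Sb.mulVecLin with hK
  have hrank : Sb.rank + Module.finrank ℝ K = n := by
    have := LinearMap.finrank_range_add_finrank_ker Sb.mulVecLin
    rwa [Module.finrank_fin_fun] at this
  have hrle : Sb.rank ≤ n := by omega
  have hdim : Module.finrank ℝ K ≤ 1 := by omega
  obtain ⟨v₀, hv₀⟩ := finrank_le_one_iff.mp hdim
  set v : Fin n → ℝ := (v₀ : Fin n → ℝ) with hv
  have hvker : Sb *ᵥ v = 0 := by
    have := v₀.2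
    rwa [LinearMap.mem_ker, Matrix.mulVecLin_apply] at this
  -- every H with Sb * H = 0 has columns that are multiples of v
  have hcol : ∀ H : Matrix (Fin n) (Fin n) ℝ, Sb * H = 0 →
      ∃ c : Fin n → ℝ, ∀ i j, H i j = c j * v i := by
    intro H hH
    have hcolK : ∀ j, (fun i => H i j) ∈ K := by
      intro j
      rw [hK, LinearMap.mem_ker, Matrix.mulVecLin_apply]
      ext i
      have : (Sb * H) i j = 0 := by rw [hH]; rfl
      simpa [Matrix.mulVec, Matrix.mul_apply, dotProduct] using this
    choose c hc using fun j => hv₀ ⟨fun i => H i j, hcolK j⟩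
    refine ⟨c, fun i j => ?_⟩
    have h' := congrFun (congrArg Subtype.val (hc j)) i
    simp only [Submodule.coe_smul, Pi.smul_apply, smul_eq_mul] at h'
    exact h'.symm
  -- N is the ray generated by -(vecMulVec v v)
  have hNray : N = {X : Matrix (Fin n) (Fin n) ℝ | ∃ t : ℝ, 0 ≤ t ∧
      X = t • (-(Matrix.vecMulVec v v))} := by
    ext H
    rw [hN]
    rw [Set.mem_setOf_eq, Set.mem_setOf_eq, memN_iff Sb hS H]
    constructor
    · rintro ⟨hsym, hpsd, hmul⟩
      obtain ⟨c, hc⟩ := hcol H hmul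
      by_cases hv0 : v = 0
      · refine ⟨0, le_refl _, ?_⟩
        ext i j
        simp [hc i j, hv0]
      · obtain ⟨i₀, hi₀⟩ : ∃ i₀, v i₀ ≠ 0 := by
          by_contra hcon
          push_neg at hcon
          exact hv0 (funext hcon)
        set lam := c i₀ / v i₀ with hlam
        have hcj : ∀ j, c j = lam * v j := by
          intro j
          have hsymij : H i₀ j = H j i₀ := by
            have := congrFun (congrFun hsym j) i₀
            simpa [Matrix.transpose_apply] using this
          rw [hc i₀ j, hc j i₀] at hsymij
          rw [hlam]
          field_simp
          linarith [hsymij]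
        have hHlam : H = lam • Matrix.vecMulVec v v := by
          ext i j
          simp [hc i j, hcj j, Matrix.vecMulVec_apply]
          ring
        have hlamnp0 : lam ≤ 0 := by
          have h2 := hpsd.dotProduct_mulVec_nonneg v
          rw [star_trivial, hHlam] at h2
          have hmv : (-(lam • Matrix.vecMulVec v v)) *ᵥ v = (-(lam * (v ⬝ᵥ v))) • v := by
            rw [Matrix.neg_mulVec, Matrix.smul_mulVec, vecMulVec_mulVec']
            ext i
            simp
            ring
          rw [hmv] at h2
          simp only [dotProduct_smul, smul_eq_mul] at h2
          have hvv : 0 < v ⬝ᵥ v := by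
            rcases lt_or_eq_of_le (Finset.sum_nonneg (fun i _ => mul_self_nonneg (v i)) :
              (0:ℝ) ≤ v ⬝ᵥ v) with h | h
            · exact h
            · exact absurd (dotProduct_self_eq_zero.mp h.symm) hv0
          by_contra hl
          push_neg at hl
          nlinarith [mul_pos (mul_pos hl hvv) hvv]
        refine ⟨-lam, by linarith, ?_⟩
        rw [hHlam]
        ext i j
        simp
    · rintro ⟨t, ht, rfl⟩
      have hsymvv : (Matrix.vecMulVec v v)ᵀ = Matrix.vecMulVec v v := by
        ext i j
        simp [Matrix.transpose_apply, Matrix.vecMulVec_apply, mul_comm]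
      refine ⟨?_, ?_, ?_⟩
      · rw [Matrix.transpose_smul, Matrix.transpose_neg, hsymvv]
      · have : -(t • (-(Matrix.vecMulVec v v))) = t • Matrix.vecMulVec v v := by
          ext i j
          simp
        rw [this]
        refine Matrix.PosSemidef.of_dotProduct_mulVec_nonneg ?_ ?_
        · rw [Matrix.IsHermitian, Matrix.conjTranspose_eq_transpose_of_trivial,
            Matrix.transpose_smul, hsymvv]
        · intro x
          rw [star_trivial, Matrix.smul_mulVec, dotProduct_smul, vecMulVec_mulVec']
          simp only [smul_eq_mul, dotProduct_smul]
          rw [dotProduct_comm x v]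
          exact mul_nonneg ht (mul_self_nonneg _)
      · have hSvv : Sb * Matrix.vecMulVec v v = 0 := by
          ext i j
          simp only [Matrix.mul_apply, Matrix.vecMulVec_apply, Matrix.zero_apply]
          have : (Sb *ᵥ v) i = 0 := by rw [hvker]; rfl
          simp only [Matrix.mulVec, dotProduct] at this
          calc ∑ k, Sb i k * (v k * v j) = (∑ k, Sb i k * v k) * v j := by
                rw [Finset.sum_mul]; congr 1; ext k; ring
          _ = 0 := by rw [this, zero_mul]
        rw [Matrix.mul_smul, Matrix.mul_neg, hSvv]
        simp
  rw [hNray]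
  by_cases hv0 : v = 0
  · have : {X : Matrix (Fin n) (Fin n) ℝ | ∃ t : ℝ, 0 ≤ t ∧
        X = t • (-(Matrix.vecMulVec v v))} = {0} := by
      ext X
      simp only [hv0, Set.mem_setOf_eq, Set.mem_singleton_iff]
      constructor
      · rintro ⟨t, ht, rfl⟩
        ext i j
        simp [Matrix.vecMulVec_apply]
      · rintro rfl
        exact ⟨0, le_refl _, by ext i j; simp [Matrix.vecMulVec_apply]⟩
    rw [this]
    exact singleton_zero_polyhedral n
  · obtain ⟨i₀, hi₀⟩ : ∃ i₀, v i₀ ≠ 0 := by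
      by_contra hcon
      push_neg at hcon
      exact hv0 (funext hcon)
    exact ray_polyhedral n (-(Matrix.vecMulVec v v)) i₀ i₀
      (by simp [Matrix.vecMulVec_apply]; positivity)

lemma vecMulVec_self_transpose {n : ℕ} (u : Fin n → ℝ) :
    (Matrix.vecMulVec u u)ᵀ = Matrix.vecMulVec u u := by
  ext i j
  simp [Matrix.transpose_apply, Matrix.vecMulVec_apply, mul_comm]

lemma quad_zero {a B c t₁ t₂ t₃ : ℝ} (h12 : t₁ ≠ t₂) (h13 : t₁ ≠ t₃) (h23 : t₂ ≠ t₃)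
    (e1 : a + B * t₁ + c * t₁^2 = 0) (e2 : a + B * t₂ + c * t₂^2 = 0)
    (e3 : a + B * t₃ + c * t₃^2 = 0) : a = 0 ∧ B = 0 ∧ c = 0 := by
  have k12 : (t₁ - t₂) * (B + c * (t₁ + t₂)) = 0 := by linear_combination e1 - e2
  have k13 : (t₁ - t₃) * (B + c * (t₁ + t₃)) = 0 := by linear_combination e1 - e3
  have j12 : B + c * (t₁ + t₂) = 0 := by
    rcases mul_eq_zero.mp k12 with h | h
    · exact absurd (sub_eq_zero.mp h) h12
    · exact h
  have j13 : B + c * (t₁ + t₃) = 0 := by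
    rcases mul_eq_zero.mp k13 with h | h
    · exact absurd (sub_eq_zero.mp h) h13
    · exact h
  have hc : c = 0 := by
    have hcc : c * (t₂ - t₃) = 0 := by linear_combination j12 - j13
    rcases mul_eq_zero.mp hcc with h | h
    · exact h
    · exact absurd (sub_eq_zero.mp h) h23
  have hB : B = 0 := by linear_combination j12 - (t₁ + t₂) * hc
  have hA : a = 0 := by linear_combination e1 - t₁ * hB - t₁^2 * hc
  exact ⟨hA, hB, hc⟩

set_option maxHeartbeats 1000000 in
lemma forward_dir (n : ℕ) (Sb : Matrix (Fin n) (Fin n) ℝ) (hS : Sb.PosSemidef)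
    (N : Set (Matrix (Fin n) (Fin n) ℝ))
    (hN : N = {H | Hᵀ = H ∧ ∀ S : Matrix (Fin n) (Fin n) ℝ, S.PosSemidef →
      Matrix.trace (Hᵀ * (S - Sb)) ≤ 0})
    (hpoly : IsPolyhedral N) : n - 1 ≤ Sb.rank := by
  classical
  by_contra hr
  push_neg at hr
  set K := LinearMap.ker Sb.mulVecLin with hKdef
  have hrank : Sb.rank + Module.finrank ℝ K = n := by
    have := LinearMap.finrank_range_add_finrank_ker Sb.mulVecLin
    rwa [Module.finrank_fin_fun] at this
  have hnot : ¬ (Module.finrank ℝ K ≤ 1) := by omega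
  rw [finrank_le_one_iff] at hnot
  -- get a nonzero element of K
  have ha : ∃ a : K, a ≠ 0 := by
    by_contra hcon
    push_neg at hcon
    exact hnot ⟨0, fun w => ⟨0, by rw [hcon w, smul_zero]⟩⟩
  obtain ⟨a, ha0⟩ := ha
  push_neg at hnot
  obtain ⟨b, hb⟩ := hnot a
  set e₁ : Fin n → ℝ := (a : Fin n → ℝ) with he₁
  have he₁0 : e₁ ≠ 0 := fun h => ha0 (Subtype.ext h)
  have hal : 0 < e₁ ⬝ᵥ e₁ := by
    rcases lt_or_eq_of_le (Finset.sum_nonneg (fun i _ => mul_self_nonneg (e₁ i)) :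
      (0:ℝ) ≤ e₁ ⬝ᵥ e₁) with h | h
    · exact h
    · exact absurd (dotProduct_self_eq_zero.mp h.symm) he₁0
  set al := e₁ ⬝ᵥ e₁ with hal_def
  set e₂ : Fin n → ℝ := (b : Fin n → ℝ) - ((e₁ ⬝ᵥ (b : Fin n → ℝ)) / al) • e₁ with he₂
  have he₂0 : e₂ ≠ 0 := by
    intro h
    apply hb ((e₁ ⬝ᵥ (b : Fin n → ℝ)) / al)
    apply Subtype.ext
    have := sub_eq_zero.mp h
    simpa using this.symm
  have hbe : 0 < e₂ ⬝ᵥ e₂ := by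
    rcases lt_or_eq_of_le (Finset.sum_nonneg (fun i _ => mul_self_nonneg (e₂ i)) :
      (0:ℝ) ≤ e₂ ⬝ᵥ e₂) with h | h
    · exact h
    · exact absurd (dotProduct_self_eq_zero.mp h.symm) he₂0
  set be := e₂ ⬝ᵥ e₂ with hbe_def
  have hd12 : e₁ ⬝ᵥ e₂ = 0 := by
    rw [he₂, dotProduct_sub, dotProduct_smul, smul_eq_mul, ← hal_def]
    field_simp
    ring
  have hd21 : e₂ ⬝ᵥ e₁ = 0 := by rw [dotProduct_comm]; exact hd12
  have hker1 : Sb *ᵥ e₁ = 0 := by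
    have := a.2
    rwa [LinearMap.mem_ker, Matrix.mulVecLin_apply] at this
  have hker2 : Sb *ᵥ e₂ = 0 := by
    have hmem : e₂ ∈ K := K.sub_mem b.2 (K.smul_mem _ a.2)
    rwa [LinearMap.mem_ker, Matrix.mulVecLin_apply] at hmem
  -- set up the family of points
  set u : ℝ → (Fin n → ℝ) := fun t => e₁ + t • e₂ with hu
  set w : ℝ → (Fin n → ℝ) := fun t => (be * t) • e₁ - al • e₂ with hw
  set MA := Matrix.vecMulVec e₁ e₁ with hMA
  set MB₁ := Matrix.vecMulVec e₁ e₂ with hMB₁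
  set MB₂ := Matrix.vecMulVec e₂ e₁ with hMB₂
  set MC := Matrix.vecMulVec e₂ e₂ with hMC
  have huu : ∀ t : ℝ, Matrix.vecMulVec (u t) (u t) = MA + t • (MB₁ + MB₂) + (t^2) • MC := by
    intro t
    ext i j
    simp only [hu, hMA, hMB₁, hMB₂, hMC, Matrix.vecMulVec_apply, Matrix.add_apply,
      Matrix.smul_apply, Pi.add_apply, Pi.smul_apply, smul_eq_mul]
    ring
  have hww : ∀ t : ℝ, Matrix.vecMulVec (w t) (w t) =
      ((be*t)^2) • MA - (al*(be*t)) • (MB₁ + MB₂) + (al^2) • MC := by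
    intro t
    ext i j
    simp only [hw, hMA, hMB₁, hMB₂, hMC, Matrix.vecMulVec_apply, Matrix.add_apply,
      Matrix.sub_apply, Matrix.smul_apply, Pi.sub_apply, Pi.smul_apply, smul_eq_mul]
    ring
  have hkeru : ∀ t : ℝ, Sb *ᵥ u t = 0 := by
    intro t
    rw [hu]
    simp only [Matrix.mulVec_add, Matrix.mulVec_smul, hker1, hker2, smul_zero, add_zero]
  have hwu : ∀ t : ℝ, (w t) ⬝ᵥ (u t) = 0 := by
    intro t
    simp only [hw, hu, sub_dotProduct, smul_dotProduct, dotProduct_add, dotProduct_smul,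
      smul_eq_mul, ← hal_def, ← hbe_def, hd12, hd21]
    ring
  have hwupos : ∀ t : ℝ, (w t) ⬝ᵥ (w t) = al * be * (be * t^2 + al) := by
    intro t
    simp only [hw, sub_dotProduct, smul_dotProduct, dotProduct_sub, dotProduct_smul,
      smul_eq_mul, ← hal_def, ← hbe_def, hd12, hd21]
    ring
  set H : ℝ → Matrix (Fin n) (Fin n) ℝ := fun t => -(Matrix.vecMulVec (u t) (u t)) with hH
  set W : ℝ → Matrix (Fin n) (Fin n) ℝ := fun t => Matrix.vecMulVec (w t) (w t) with hW
  have hHt : ∀ t, H t = -(Matrix.vecMulVec (u t) (u t)) := fun _ => rfl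
  have hWt : ∀ t, W t = Matrix.vecMulVec (w t) (w t) := fun _ => rfl
  -- membership of s • H t in N
  have hmem : ∀ (t s : ℝ), 0 ≤ s → s • H t ∈ N := by
    intro t s hs
    rw [hN]
    constructor
    · rw [Matrix.transpose_smul, hHt, Matrix.transpose_neg, vecMulVec_self_transpose]
    · intro S hSpsd
      have hTs : (s • H t)ᵀ = s • H t := by
        rw [Matrix.transpose_smul, hHt, Matrix.transpose_neg, vecMulVec_self_transpose]
      rw [hTs]
      have : s • H t * (S - Sb) = (-s) • (Matrix.vecMulVec (u t) (u t) * (S - Sb)) := by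
        rw [Matrix.smul_mul, hHt, Matrix.neg_mul, smul_neg, neg_smul]
      rw [this, Matrix.trace_smul, trace_vecMulVec_mul]
      have hSu : (S - Sb) *ᵥ u t = S *ᵥ u t := by
        rw [Matrix.sub_mulVec, hkeru, sub_zero]
      rw [hSu]
      have hq := hSpsd.dotProduct_mulVec_nonneg (u t)
      rw [star_trivial] at hq
      simp only [smul_eq_mul]
      nlinarith
  -- nonmembership of s • H t + W t
  have hnonmem : ∀ (t s : ℝ), s • H t + W t ∉ N := by
    intro t s hmem'
    rw [hN] at hmem'
    obtain ⟨hsym', hall'⟩ := hmem'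
    have hWpsd : (W t).PosSemidef := posSemidef_vecMulVec_self (w t)
    have := hall' (Sb + W t) (hS.add hWpsd)
    rw [hsym', add_sub_cancel_left] at this
    have htr : Matrix.trace ((s • H t + W t) * W t) = (w t ⬝ᵥ w t)^2 := by
      rw [Matrix.add_mul, Matrix.trace_add]
      have h1 : s • H t * W t = (-s) • (Matrix.vecMulVec (u t) (u t) * W t) := by
        rw [Matrix.smul_mul, hHt, Matrix.neg_mul, smul_neg, neg_smul]
      rw [h1, Matrix.trace_smul, trace_vecMulVec_mul, hWt, trace_vecMulVec_mul]
      rw [vecMulVec_mulVec', vecMulVec_mulVec']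
      rw [hwu]
      simp only [dotProduct_smul, smul_eq_mul, zero_smul, dotProduct_zero]
      ring
    rw [htr] at this
    have hwwt : 0 < w t ⬝ᵥ w t := by
      rw [hwupos]
      have : 0 < be * t^2 + al := by positivity
      positivity
    nlinarith
  -- extract polyhedral description
  obtain ⟨k, f, bd, hP⟩ := hpoly
  have hzeroN : (0 : Matrix (Fin n) (Fin n) ℝ) ∈ N := by
    rw [hN]
    refine ⟨by simp, fun S hSpsd => ?_⟩
    simp
  have hbd : ∀ i, 0 ≤ bd i := by
    intro i
    have := hzeroN
    rw [hP] at this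
    have h0 := this i
    rwa [map_zero] at h0
  have hfH_le : ∀ (t : ℝ) (i : Fin k), f i (H t) ≤ 0 := by
    intro t i
    by_contra hpos
    push_neg at hpos
    have hs : (0:ℝ) ≤ (bd i + 1) / f i (H t) :=
      div_nonneg (by linarith [hbd i]) hpos.le
    have := hmem t _ hs
    rw [hP] at this
    have h2 := this i
    rw [LinearMap.map_smul, smul_eq_mul, div_mul_cancel₀ _ (ne_of_gt hpos)] at h2
    linarith
  have hkey : ∀ t : ℝ, ∃ i : Fin k, f i (H t) = 0 ∧ 0 < f i (W t) := by
    intro t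
    by_contra hcon
    push_neg at hcon
    obtain ⟨M, hM⟩ := (Set.finite_range
      (fun i => (f i (W t) - bd i) / (-(f i (H t))))).bddAbove
    set s := max M 0 with hs
    have hs0 : (0:ℝ) ≤ s := le_max_right _ _
    have hmem2 : s • H t + W t ∈ N := by
      rw [hP]
      intro i
      rw [LinearMap.map_add, LinearMap.map_smul, smul_eq_mul]
      by_cases hz : f i (H t) = 0
      · rw [hz, mul_zero, zero_add]
        exact le_trans (hcon i hz) (hbd i)
      · have hneg : f i (H t) < 0 := lt_of_le_of_ne (hfH_le t i) hz
        have hgi : (f i (W t) - bd i) / (-(f i (H t))) ≤ M :=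
          hM (Set.mem_range_self i)
        have hgi' : (f i (W t) - bd i) / (-(f i (H t))) ≤ s := le_trans hgi (le_max_left _ _)
        rw [div_le_iff₀ (by linarith : (0:ℝ) < -(f i (H t)))] at hgi'
        nlinarith
    exact hnonmem t s hmem2
  -- pigeonhole over natural parameter values
  choose φ hφ1 hφ2 using fun m : ℕ => hkey (m : ℝ)
  obtain ⟨i, hifib⟩ := Finite.exists_infinite_fiber φ
  have hSinf : (φ ⁻¹' {i}).Infinite := Set.infinite_coe_iff.mp hifib
  obtain ⟨m₁, hm₁⟩ := hSinf.nonempty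
  obtain ⟨m₂, hm₂, h12⟩ := hSinf.exists_gt m₁
  obtain ⟨m₃, hm₃, h23⟩ := hSinf.exists_gt m₂
  have hφm₁ : φ m₁ = i := hm₁
  have hφm₂ : φ m₂ = i := hm₂
  have hφm₃ : φ m₃ = i := hm₃
  -- the quadratic equations
  have hfHt : ∀ m : ℕ, f (φ m) (H (m:ℝ)) = 0 := hφ1
  have hHexp : ∀ t : ℝ, f i (H t) =
      -(f i MA + t * (f i MB₁ + f i MB₂) + t^2 * f i MC) := by
    intro t
    rw [hHt, huu t]
    simp only [neg_add_rev, LinearMap.map_add, LinearMap.map_neg, LinearMap.map_smul,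
      smul_eq_mul]
    try ring
  have hWexp : ∀ t : ℝ, f i (W t) =
      (be*t)^2 * f i MA - (al*(be*t)) * (f i MB₁ + f i MB₂) + al^2 * f i MC := by
    intro t
    rw [hWt, hww t]
    simp only [LinearMap.map_add, LinearMap.map_sub, LinearMap.map_smul, smul_eq_mul]
    try ring
  have heq : ∀ m : ℕ, φ m = i →
      f i MA + (f i MB₁ + f i MB₂) * (m:ℝ) + f i MC * (m:ℝ)^2 = 0 := by
    intro m hφm
    have h0 := hφ1 m
    rw [hφm, hHexp] at h0
    have := neg_eq_zero.mp h0
    linarith [this]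
  have e1 := heq m₁ hφm₁
  have e2 := heq m₂ hφm₂
  have e3 := heq m₃ hφm₃
  have hne12 : (m₁:ℝ) ≠ (m₂:ℝ) := by exact_mod_cast ne_of_lt h12
  have hne13 : (m₁:ℝ) ≠ (m₃:ℝ) := by exact_mod_cast ne_of_lt (lt_trans h12 h23)
  have hne23 : (m₂:ℝ) ≠ (m₃:ℝ) := by exact_mod_cast ne_of_lt h23
  obtain ⟨hA0, hB0, hC0⟩ := quad_zero hne12 hne13 hne23 e1 e2 e3
  have hWpos := hφ2 m₁
  rw [hφm₁, hWexp] at hWpos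
  rw [hA0, hB0, hC0] at hWpos
  simp at hWpos

/-- For symmetric PSD matrices `X̄, S̄` with `⟨X̄, S̄⟩ = 0`, the normal cone
`N_{S₊ⁿ}(S̄)` is a polyhedral set if and only if `rank S̄ ≥ n − 1`. -/
theorem normalCone_polyhedral_iff_rank_ge
    (n : ℕ) (Xb Sb : Matrix (Fin n) (Fin n) ℝ)
    (hX : Xb.PosSemidef) (hS : Sb.PosSemidef)
    (hcomp : Matrix.trace (Xb * Sb) = 0)
    (N : Set (Matrix (Fin n) (Fin n) ℝ))
    (hN : N = {H | Hᵀ = H ∧ ∀ S : Matrix (Fin n) (Fin n) ℝ, S.PosSemidef →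
      Matrix.trace (Hᵀ * (S - Sb)) ≤ 0}) :
    IsPolyhedral N ↔ n - 1 ≤ Sb.rank := by
  constructor
  · exact forward_dir n Sb hS N hN
  · exact backward_dir n Sb hS N hN
end

section
/- Metric subregularity of the normal cone map of the PSD cone: let S̄, X̄ ∈ S₊ⁿ with ⟨X̄, S̄⟩ = 0. Then there exist constants κ > 0 and ρ > 0 such that ⟨X̄, −S + S̄⟩ + κ·dist²(−S, N_{S₊ⁿ}(X̄)) ≤ 0 for all S ∈ S₊ⁿ with ‖S − S̄‖ ≤ ρ. -/
open Matrix

attribute [local instance] Matrix.frobeniusNormedAddCommGroup Matrix.frobeniusNormedSpace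

variable {n : ℕ}


lemma my_psd_trace_nonneg {A : Matrix (Fin n) (Fin n) ℝ} (hA : A.PosSemidef) :
    0 ≤ A.trace := by
  rw [Matrix.trace]
  apply Finset.sum_nonneg
  intro i _
  exact hA.diag_nonneg

open scoped MatrixOrder in
lemma my_posSemidef_eq_conjTranspose_mul_self {A : Matrix (Fin n) (Fin n) ℝ} (hA : A.PosSemidef) :
    ∃ C : Matrix (Fin n) (Fin n) ℝ, A = Cᴴ * C := by
  obtain ⟨C, rfl⟩ := CStarAlgebra.nonneg_iff_eq_star_mul_self.mp hA.nonneg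
  exact ⟨C, rfl⟩

lemma my_psd_trace_mul_nonneg {A B : Matrix (Fin n) (Fin n) ℝ}
    (hA : A.PosSemidef) (hB : B.PosSemidef) : 0 ≤ (A * B).trace := by
  obtain ⟨C, rfl⟩ := my_posSemidef_eq_conjTranspose_mul_self hA
  have h1 : (C * B * Cᴴ).trace = (Cᴴ * C * B).trace := Matrix.trace_mul_cycle C B Cᴴ
  rw [← h1]
  exact my_psd_trace_nonneg (hB.mul_mul_conjTranspose_same C)

lemma my_trace_mono {Q A B : Matrix (Fin n) (Fin n) ℝ} (hQ : Q.PosSemidef)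
    (hBA : (B - A).PosSemidef) : (Q * A).trace ≤ (Q * B).trace := by
  have := my_psd_trace_mul_nonneg hQ hBA
  rw [Matrix.mul_sub, Matrix.trace_sub] at this
  linarith

lemma my_psd_decomp {S : Matrix (Fin n) (Fin n) ℝ} (hS : S.PosSemidef) :
    ∃ (V : Matrix (Fin n) (Fin n) ℝ) (d : Fin n → ℝ), star V * V = 1 ∧ V * star V = 1 ∧
      (∀ i, 0 ≤ d i) ∧ S = V * diagonal d * star V := by
  have hH := hS.1
  refine ⟨hH.eigenvectorUnitary, hH.eigenvalues, ?_, ?_, fun i => hS.eigenvalues_nonneg i, ?_⟩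
  · exact_mod_cast (Matrix.mem_unitaryGroup_iff').mp hH.eigenvectorUnitary.2
  · exact_mod_cast (Matrix.mem_unitaryGroup_iff).mp hH.eigenvectorUnitary.2
  · simpa [RCLike.ofReal_real_eq_id] using hH.spectral_theorem

lemma my_sq_le_trace_smul {S : Matrix (Fin n) (Fin n) ℝ} (hS : S.PosSemidef) :
    (S.trace • S - S * S).PosSemidef := by
  obtain ⟨V, d, hVV, hVV', hd, hSpec⟩ := my_psd_decomp hS
  have htr : S.trace = ∑ i, d i := by
    rw [hSpec, Matrix.trace_mul_cycle, hVV, Matrix.one_mul, Matrix.trace_diagonal]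
  obtain ⟨t, ht⟩ : ∃ t : ℝ, S.trace = t := ⟨_, rfl⟩
  have key : t • S - S * S
      = V * Matrix.diagonal (fun i => t * d i - d i ^ 2) * star V := by
    rw [hSpec]
    have h2 : (V * Matrix.diagonal d * star V) * (V * Matrix.diagonal d * star V)
        = V * (Matrix.diagonal d * Matrix.diagonal d) * star V := by
      simp only [Matrix.mul_assoc]
      rw [← Matrix.mul_assoc (star V) V, hVV, Matrix.one_mul]
    rw [h2, Matrix.diagonal_mul_diagonal]
    have h3 : t • (V * Matrix.diagonal d * star V)
        = V * Matrix.diagonal (t • d) * star V := by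
      rw [Matrix.diagonal_smul, Matrix.mul_smul, Matrix.smul_mul]
    rw [h3, ← Matrix.sub_mul, ← Matrix.mul_sub]
    congr 2
    ext i j
    by_cases h : i = j <;>
      simp [Matrix.sub_apply, Matrix.diagonal_apply, h, sq, smul_eq_mul]
  rw [ht, key]
  have hdiag : (Matrix.diagonal (fun i => t * d i - d i ^ 2)).PosSemidef := by
    rw [Matrix.posSemidef_diagonal_iff]
    intro i
    have h2 : d i ≤ t := by
      rw [← ht, htr]
      exact Finset.single_le_sum (fun j _ => hd j) (Finset.mem_univ i)
    nlinarith [hd i]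
  simpa [Matrix.star_eq_conjTranspose] using hdiag.mul_mul_conjTranspose_same V

lemma my_norm_sq_eq_trace (M : Matrix (Fin n) (Fin n) ℝ) : ‖M‖ ^ 2 = (Mᵀ * M).trace := by
  have h : (Mᵀ * M).trace = ∑ i, ∑ j, ‖M j i‖ ^ (2:ℝ) := by
    rw [Matrix.trace]
    congr 1
    funext i
    rw [Matrix.diag, Matrix.mul_apply]
    congr 1
    funext j
    rw [Matrix.transpose_apply]
    have : ‖M j i‖ ^ (2:ℝ) = ‖M j i‖ ^ (2:ℕ) := by
      rw [← Real.rpow_natCast]; norm_num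
    rw [this, Real.norm_eq_abs, sq_abs, sq]
  rw [h, Matrix.frobenius_norm_def]
  rw [← Real.rpow_natCast _ 2, ← Real.rpow_mul (by positivity)]
  norm_num
  rw [Finset.sum_comm]

lemma my_entry_le_norm (M : Matrix (Fin n) (Fin n) ℝ) (i j : Fin n) : |M i j| ≤ ‖M‖ := by
  have h2 : |M i j| ^ 2 ≤ ‖M‖ ^ 2 := by
    rw [my_norm_sq_eq_trace]
    have h3 : (Mᵀ * M).trace = ∑ a, ∑ b, (M b a) ^ 2 := by
      rw [Matrix.trace]
      congr 1; funext a
      rw [Matrix.diag, Matrix.mul_apply]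
      congr 1; funext b
      rw [Matrix.transpose_apply, sq]
    rw [h3, sq_abs]
    calc (M i j) ^ 2 ≤ ∑ b, (M b j) ^ 2 :=
          Finset.single_le_sum (f := fun b => (M b j) ^ 2) (fun b _ => sq_nonneg _) (Finset.mem_univ i)
      _ ≤ ∑ a, ∑ b, (M b a) ^ 2 :=
          Finset.single_le_sum (f := fun a => ∑ b, (M b a) ^ 2)
            (fun a _ => Finset.sum_nonneg fun b _ => sq_nonneg _) (Finset.mem_univ j)
  calc |M i j| = √(|M i j| ^ 2) := (Real.sqrt_sq (abs_nonneg _)).symm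
    _ ≤ √(‖M‖ ^ 2) := Real.sqrt_le_sqrt h2
    _ = ‖M‖ := Real.sqrt_sq (norm_nonneg _)

lemma my_transpose_eq {M : Matrix (Fin n) (Fin n) ℝ} (h : M.IsHermitian) : Mᵀ = M := by
  rw [← Matrix.conjTranspose_eq_transpose_of_trivial]; exact h

/-- Metric subregularity estimate for the normal cone map of the PSD cone: for
`X̄, S̄ ∈ S₊ⁿ` with `⟨X̄, S̄⟩ = 0`, there exist `κ > 0` and `ρ > 0` such that
`⟨X̄, −S + S̄⟩ + κ · dist²(−S, N_{S₊ⁿ}(X̄)) ≤ 0` for all PSD `S` with `‖S − S̄‖ ≤ ρ`,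
where `‖·‖` is the Frobenius norm. -/
theorem psd_normalCone_metric_subregularity
    (n : ℕ) (Xb Sb : Matrix (Fin n) (Fin n) ℝ)
    (hX : Xb.PosSemidef) (hS : Sb.PosSemidef)
    (hcomp : Matrix.trace (Xb * Sb) = 0)
    (N : Set (Matrix (Fin n) (Fin n) ℝ))
    (hN : N = {H | Hᵀ = H ∧ ∀ Y : Matrix (Fin n) (Fin n) ℝ, Y.PosSemidef →
      Matrix.trace (Hᵀ * (Y - Xb)) ≤ 0}) :
    ∃ κ > (0 : ℝ), ∃ ρ > (0 : ℝ),
      ∀ S : Matrix (Fin n) (Fin n) ℝ, S.PosSemidef → ‖S - Sb‖ ≤ ρ →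
        Matrix.trace (Xbᵀ * (-S + Sb)) + κ * (Metric.infDist (-S) N) ^ 2 ≤ 0 := by
  by_cases hX0 : Xb = 0
  · refine ⟨1, one_pos, 1, one_pos, ?_⟩
    intro S hSpsd hball
    have hmem : -S ∈ N := by
      rw [hN]
      refine ⟨?_, ?_⟩
      · rw [Matrix.transpose_neg, my_transpose_eq hSpsd.1]
      · intro Y hY
        have h1 : (-S)ᵀ * (Y - Xb) = -(S * Y) := by
          rw [Matrix.transpose_neg, my_transpose_eq hSpsd.1, hX0]
          noncomm_ring
        rw [h1, Matrix.trace_neg]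
        simpa using my_psd_trace_mul_nonneg hSpsd hY
    have hd0 : Metric.infDist (-S) N = 0 := Metric.infDist_zero_of_mem hmem
    rw [hX0, hd0]
    simp
  · obtain ⟨V, d, hVV, hVV', hd, hSpec⟩ := my_psd_decomp hX
    -- helper facts about conjugated diagonals
    have hmulVDV : ∀ a b : Fin n → ℝ,
        (V * diagonal a * star V) * (V * diagonal b * star V)
          = V * diagonal (fun i => a i * b i) * star V := by
      intro a b
      simp only [Matrix.mul_assoc]
      rw [← Matrix.mul_assoc (star V) V, hVV, Matrix.one_mul,
        ← Matrix.mul_assoc (diagonal a), Matrix.diagonal_mul_diagonal]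
    have hpsdVDV : ∀ a : Fin n → ℝ, (∀ i, 0 ≤ a i) →
        (V * diagonal a * star V).PosSemidef := by
      intro a ha
      have := (Matrix.posSemidef_diagonal_iff.mpr ha).mul_mul_conjTranspose_same V
      simpa [Matrix.star_eq_conjTranspose] using this
    -- the positive eigenvalue threshold
    have hdne : ∃ i, d i ≠ 0 := by
      by_contra h
      push_neg at h
      apply hX0
      rw [hSpec, funext h]
      simp
    set F := Finset.univ.filter (fun i => d i ≠ 0) with hF_def
    have hF : F.Nonempty := ⟨hdne.choose, by simp [hF_def, hdne.choose_spec]⟩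
    set lam := F.inf' hF d with hlam_def
    have hlamle : ∀ i, d i ≠ 0 → lam ≤ d i := by
      intro i h
      exact Finset.inf'_le d (by simp [hF_def, h])
    have hlam : 0 < lam := by
      obtain ⟨i, hi, hie⟩ := F.exists_mem_eq_inf' hF d
      rw [hF_def, Finset.mem_filter] at hi
      rw [hlam_def, hie]
      exact lt_of_le_of_ne (hd i) (Ne.symm hi.2)
    -- the projection Q
    set q : Fin n → ℝ := fun i => if d i = 0 then 0 else 1 with hq_def
    set Q := V * diagonal q * star V with hQ_def
    have hQpsd : Q.PosSemidef := hpsdVDV q (fun i => by by_cases h : d i = 0 <;> simp [hq_def, h])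
    have hdq : (fun i => d i * q i) = d := by
      funext i
      by_cases h : d i = 0 <;> simp [hq_def, h]
    have hqd : (fun i => q i * d i) = d := by
      funext i
      by_cases h : d i = 0 <;> simp [hq_def, h]
    have hqq : (fun i => q i * q i) = q := by
      funext i
      by_cases h : d i = 0 <;> simp [hq_def, h]
    have hXQ : Xb * Q = Xb := by
      rw [hSpec, hQ_def, hmulVDV, hdq]
    have hQX : Q * Xb = Xb := by
      rw [hSpec, hQ_def, hmulVDV, hqd]
    have hQQ : Q * Q = Q := by
      rw [hQ_def, hmulVDV, hqq]
    have hQsym : Q.IsHermitian := hQpsd.1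
    have hlamQ : (Xb - lam • Q).PosSemidef := by
      have heq : Xb - lam • Q = V * diagonal (fun i => d i - lam * q i) * star V := by
        rw [hSpec, hQ_def]
        have h3 : lam • (V * diagonal q * star V) = V * diagonal (fun i => lam * q i) * star V := by
          have : diagonal (fun i => lam * q i) = lam • diagonal q := by
            rw [← Matrix.diagonal_smul]
            rfl
          rw [this, Matrix.mul_smul, Matrix.smul_mul]
        rw [h3, ← Matrix.sub_mul, ← Matrix.mul_sub, ← Matrix.diagonal_sub]
      rw [heq]
      apply hpsdVDV
      intro i
      by_cases h : d i = 0
      · simp [hq_def, h]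
      · simp only [hq_def, if_neg h, mul_one, sub_nonneg]
        exact hlamle i h
    clear_value Q lam
    clear hmulVDV hpsdVDV hdq hqd hqq hq_def hQ_def hlam_def hlamle hF_def hF F hdne hSpec hVV hVV' hd q V d
    -- constants
    set c0 : ℝ := Sb.trace + n + 1 with hc0_def
    have hc0 : 0 < c0 := by
      have := my_psd_trace_nonneg hS
      rw [hc0_def]
      positivity
    refine ⟨lam / (4 * c0), by positivity, 1, one_pos, ?_⟩
    intro S hSpsd hball
    have hSsym : Sᵀ = S := my_transpose_eq hSpsd.1
    -- trace bounds
    have htrS : S.trace ≤ c0 := by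
      have h1 : (S - Sb).trace ≤ (n : ℝ) := by
        rw [Matrix.trace]
        calc ∑ i, (S - Sb).diag i ≤ ∑ _i : Fin n, (1 : ℝ) := by
              apply Finset.sum_le_sum
              intro i _
              calc (S - Sb).diag i ≤ |(S - Sb) i i| := le_abs_self _
                _ ≤ ‖S - Sb‖ := my_entry_le_norm _ i i
                _ ≤ 1 := hball
          _ = (n : ℝ) := by simp
      rw [Matrix.trace_sub] at h1
      rw [hc0_def]
      linarith
    have htrS0 : 0 ≤ S.trace := my_psd_trace_nonneg hSpsd
    have hQS0 : 0 ≤ (Q * S).trace := my_psd_trace_mul_nonneg hQpsd hSpsd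
    have hXbS0 : 0 ≤ (Xb * S).trace := my_psd_trace_mul_nonneg hX hSpsd
    have hlamQS : lam * (Q * S).trace ≤ (Xb * S).trace := by
      have h1 : (S * (lam • Q)).trace ≤ (S * Xb).trace := my_trace_mono hSpsd hlamQ
      rw [Matrix.mul_smul, Matrix.trace_smul, smul_eq_mul, Matrix.trace_mul_comm S Q,
        Matrix.trace_mul_comm S Xb] at h1
      exact h1
    -- candidate point H in N
    set R := (1 : Matrix (Fin n) (Fin n) ℝ) - Q with hR_def
    have hRsym : Rᴴ = R := by
      rw [hR_def, Matrix.conjTranspose_sub, hQsym, Matrix.conjTranspose_one]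
    have hRXb : R * Xb = 0 := by
      rw [hR_def, Matrix.sub_mul, Matrix.one_mul, hQX, sub_self]
    set H := -(R * S * R) with hH_def
    have hRSR : (R * S * R).PosSemidef := by
      have := hSpsd.conjTranspose_mul_mul_same R
      rwa [hRsym] at this
    have hHsym : Hᵀ = H := by
      rw [hH_def, Matrix.transpose_neg, my_transpose_eq hRSR.1]
    have hHmem : H ∈ N := by
      rw [hN]
      refine ⟨hHsym, ?_⟩
      intro Y hY
      rw [hHsym]
      have h1 : H * (Y - Xb) = -(R * S * R * Y) := by
        rw [hH_def, Matrix.mul_sub]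
        have h2 : R * S * R * Xb = 0 := by
          rw [Matrix.mul_assoc, hRXb, Matrix.mul_zero]
        rw [Matrix.neg_mul, Matrix.neg_mul, h2, neg_zero, sub_zero]
      rw [h1, Matrix.trace_neg]
      simpa using my_psd_trace_mul_nonneg hRSR hY
    -- distance bound
    have hdistle : Metric.infDist (-S) N ≤ ‖Q * S‖ + ‖R * S * Q‖ := by
      have h1 : Metric.infDist (-S) N ≤ dist (-S) H := Metric.infDist_le_dist_of_mem hHmem
      rw [dist_eq_norm] at h1
      have h2 : -S - H = -(Q * S + R * S * Q) := by
        rw [hH_def, hR_def]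
        noncomm_ring
      rw [h2, norm_neg] at h1
      exact h1.trans (norm_add_le _ _)
    -- square norm bounds
    have hQSS : (Q * (S * S)).trace ≤ S.trace * (Q * S).trace := by
      have h1 := my_trace_mono hQpsd (my_sq_le_trace_smul hSpsd)
      rwa [Matrix.mul_smul, Matrix.trace_smul, smul_eq_mul] at h1
    have htrQSSQ : (Q * S * S * Q).trace = (Q * (S * S)).trace := by
      rw [Matrix.trace_mul_comm (Q * S * S) Q, ← Matrix.mul_assoc, ← Matrix.mul_assoc, hQQ,
        Matrix.mul_assoc]
    have key1 : ‖Q * S‖ ^ 2 ≤ S.trace * (Q * S).trace := by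
      rw [my_norm_sq_eq_trace]
      have h1 : (Q * S)ᵀ * (Q * S) = S * Q * S := by
        rw [Matrix.transpose_mul, hSsym, my_transpose_eq hQsym]
        calc S * Q * (Q * S) = S * (Q * Q) * S := by noncomm_ring
          _ = S * Q * S := by rw [hQQ]
      have h2 : (S * Q * S).trace = (Q * (S * S)).trace := by
        rw [Matrix.mul_assoc S Q S, Matrix.trace_mul_comm S (Q * S), Matrix.mul_assoc Q S S]
      rw [h1, h2]
      exact hQSS
    have hRT : Rᵀ = R := my_transpose_eq hRsym
    have hRR : R * R = R := by
      rw [hR_def]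
      calc (1 - Q) * (1 - Q) = 1 - Q - Q + Q * Q := by noncomm_ring
        _ = 1 - Q := by rw [hQQ]; abel
    clear_value R H
    have key2 : ‖R * S * Q‖ ^ 2 ≤ S.trace * (Q * S).trace := by
      rw [my_norm_sq_eq_trace]
      have h1 : (R * S * Q)ᵀ * (R * S * Q) = Q * S * R * S * Q := by
        rw [Matrix.transpose_mul, Matrix.transpose_mul, hSsym, my_transpose_eq hQsym, hRT]
        calc Q * (S * R) * (R * S * Q) = Q * S * (R * R) * S * Q := by noncomm_ring
          _ = Q * S * R * S * Q := by rw [hRR]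
      have h5 : ((S * Q)ᴴ * Q * (S * Q)).PosSemidef := hQpsd.conjTranspose_mul_mul_same (S * Q)
      have h6 : (S * Q)ᴴ = Q * S := by
        rw [Matrix.conjTranspose_mul, hSpsd.1, hQsym]
      rw [h6] at h5
      have h7 : 0 ≤ (Q * S * Q * (S * Q)).trace := my_psd_trace_nonneg (by
        have : Q * S * Q * (S * Q) = Q * S * Q * (S * Q) := rfl
        exact (by rwa [show (Q * S) * Q * (S * Q) = Q * S * Q * (S * Q) from rfl] at h5))
      have h8 : Q * S * R * S * Q = Q * S * S * Q - Q * S * Q * (S * Q) := by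
        rw [hR_def]
        noncomm_ring
      rw [h1, h8, Matrix.trace_sub, htrQSSQ]
      linarith [hQSS]
    -- final combination
    have hXbT : Xbᵀ = Xb := my_transpose_eq hX.1
    have hgoal1 : Matrix.trace (Xbᵀ * (-S + Sb)) = -(Xb * S).trace := by
      rw [hXbT, Matrix.mul_add, Matrix.trace_add, Matrix.mul_neg, Matrix.trace_neg, hcomp]
      ring
    rw [hgoal1]
    have hDnn : 0 ≤ Metric.infDist (-S) N := Metric.infDist_nonneg
    have hD2 : (Metric.infDist (-S) N) ^ 2 ≤ 4 * (S.trace * (Q * S).trace) := by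
      nlinarith [hdistle, key1, key2, norm_nonneg (Q * S), norm_nonneg (R * S * Q),
        sq_nonneg (‖Q * S‖ - ‖R * S * Q‖)]
    have h6 : S.trace * (Q * S).trace ≤ c0 * (Q * S).trace :=
      mul_le_mul_of_nonneg_right htrS hQS0
    have h7 : (Metric.infDist (-S) N) ^ 2 ≤ 4 * (c0 * (Q * S).trace) := by linarith
    have h8 : lam / (4 * c0) * (Metric.infDist (-S) N) ^ 2
        ≤ lam / (4 * c0) * (4 * (c0 * (Q * S).trace)) :=
      mul_le_mul_of_nonneg_left h7 (by positivity)
    have h9 : lam / (4 * c0) * (4 * (c0 * (Q * S).trace)) = lam * (Q * S).trace := by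
      field_simp
    linarith
end

section
/- If F : X ⇉ Y is a set-valued polyhedral mapping (its graph is a finite union of polyhedral convex sets) and (x̄, ȳ) ∈ gph(F), then F is locally upper Lipschitz at x̄: there exist κ > 0 and ε > 0 such that F(x) ⊆ F(x̄) + κ‖x − x̄‖ B for all x with ‖x − x̄‖ ≤ ε, where B is the closed unit ball in Y. -/
set_option maxHeartbeats 1000000
set_option synthInstance.maxHeartbeats 400000
open Finset
open scoped RealInnerProductSpace

section Caratheodory
variable {Y : Type*} [AddCommGroup Y] [Module ℝ Y] {ι : Type*} [DecidableEq ι]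
lemma cone_caratheodory (u : ι → Y) :
    ∀ (n : ℕ) (s : Finset ι), s.card = n → ∀ lam : ι → ℝ, (∀ j ∈ s, 0 ≤ lam j) →
    ∃ t ⊆ s, LinearIndependent ℝ (fun j : t => u j) ∧
      ∃ mu : ι → ℝ, (∀ j ∈ t, 0 ≤ mu j) ∧ ∑ j ∈ t, mu j • u j = ∑ j ∈ s, lam j • u j := by
  intro n
  induction n using Nat.strong_induction_on with
  | _ n ih =>
    intro s hcard lam hlam
    by_cases hLI : LinearIndependent ℝ (fun j : s => u j)
    · exact ⟨s, le_refl s, hLI, lam, hlam, rfl⟩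
    · -- get a nontrivial relation with a positive coefficient
      obtain ⟨g, hgsum, i0, hgi0⟩ := Fintype.not_linearIndependent_iff.mp hLI
      obtain ⟨g, hgsum, i0, hgi0⟩ :
          ∃ g : s → ℝ, ∑ i : s, g i • u i = 0 ∧ ∃ i0 : s, 0 < g i0 := by
        rcases lt_or_gt_of_ne hgi0 with h | h
        · exact ⟨-g, by simpa [neg_smul] using congrArg Neg.neg hgsum |>.trans neg_zero,
            i0, by simpa using h⟩
        · exact ⟨g, hgsum, i0, h⟩
      set G : ι → ℝ := fun j => if h : j ∈ s then g ⟨j, h⟩ else 0 with hG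
      have hGsum : ∑ j ∈ s, G j • u j = 0 := by
        rw [← hgsum, ← Finset.sum_attach s (fun j => G j • u j)]
        exact Finset.sum_congr rfl fun j _ => by simp [hG, j.2]
      have hTne : ((s.filter fun j => 0 < G j)).Nonempty :=
        ⟨i0, Finset.mem_filter.mpr ⟨i0.2, by simpa [hG, i0.2] using hgi0⟩⟩
      obtain ⟨j0, hj0T, hj0min⟩ :=
        Finset.exists_min_image (s.filter fun j => 0 < G j) (fun j => lam j / G j) hTne
      have hj0s : j0 ∈ s := (Finset.mem_filter.mp hj0T).1
      have hGj0 : 0 < G j0 := (Finset.mem_filter.mp hj0T).2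
      set r : ℝ := lam j0 / G j0 with hr
      have hr0 : 0 ≤ r := div_nonneg (hlam j0 hj0s) hGj0.le
      set lam' : ι → ℝ := fun j => lam j - r * G j with hlam'
      have hlam'0 : ∀ j ∈ s, 0 ≤ lam' j := by
        intro j hj
        by_cases hGj : 0 < G j
        · have := hj0min j (Finset.mem_filter.mpr ⟨hj, hGj⟩)
          have : r * G j ≤ lam j := by
            rw [hr]
            calc lam j0 / G j0 * G j ≤ lam j / G j * G j := by
                  exact mul_le_mul_of_nonneg_right this hGj.le
              _ = lam j := div_mul_cancel₀ _ hGj.ne'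
          simpa [hlam'] using this
        · have : r * G j ≤ 0 := mul_nonpos_of_nonneg_of_nonpos hr0 (not_lt.mp hGj)
          have := hlam j hj
          simp only [hlam', sub_nonneg]
          linarith
      have hlam'j0 : lam' j0 = 0 := by
        simp [hlam', hr, div_mul_cancel₀ _ hGj0.ne']
      have hsum' : ∑ j ∈ s.erase j0, lam' j • u j = ∑ j ∈ s, lam j • u j := by
        rw [Finset.sum_erase _ (by simp [hlam'j0])]
        have : ∑ j ∈ s, lam' j • u j
            = ∑ j ∈ s, lam j • u j - r • ∑ j ∈ s, G j • u j := by
          rw [Finset.smul_sum, ← Finset.sum_sub_distrib]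
          exact Finset.sum_congr rfl fun j _ => by
            simp [hlam', sub_smul, smul_smul]
        rw [this, hGsum, smul_zero, sub_zero]
      have hcard' : (s.erase j0).card < n := by
        rw [← hcard]
        exact Finset.card_erase_lt_of_mem hj0s
      obtain ⟨t, hts, hLI', mu, hmu0, hmusum⟩ :=
        ih _ hcard' (s.erase j0) rfl lam' (fun j hj => hlam'0 j (Finset.mem_of_mem_erase hj))
      exact ⟨t, hts.trans (Finset.erase_subset _ _), hLI', mu, hmu0, hmusum.trans hsum'⟩

end Caratheodory

section Farkas
variable {Y : Type*} [NormedAddCommGroup Y] [InnerProductSpace ℝ Y] [FiniteDimensional ℝ Y]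

/-- The weighted-sum map of a finite family, as a linear map. -/
noncomputable def sumSmulMap {ι : Type*} [Fintype ι] (u : ι → Y) : (ι → ℝ) →ₗ[ℝ] Y where
  toFun := fun mu => ∑ j, mu j • u j
  map_add' := by intros a b; simp [add_smul, Finset.sum_add_distrib]
  map_smul' := by intros c a; simp [smul_smul, Finset.smul_sum]

lemma sumSmulMap_ker {ι : Type*} [Fintype ι] {u : ι → Y}
    (hLI : LinearIndependent ℝ u) : LinearMap.ker (sumSmulMap u) = ⊥ := by
  rw [LinearMap.ker_eq_bot']
  intro m hm
  exact funext fun j => Fintype.linearIndependent_iff.mp hLI m hm j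

lemma farkas_cone {ι : Type*} [Fintype ι] [DecidableEq ι] (u : ι → Y) (v : Y)
    (hv : ∀ d : Y, (∀ j, ⟪u j, d⟫ ≤ 0) → ⟪v, d⟫ ≤ 0) :
    ∃ (t : Finset ι) (mu : ι → ℝ), LinearIndependent ℝ (fun j : t => u j) ∧
      (∀ j ∈ t, 0 ≤ mu j) ∧ ∑ j ∈ t, mu j • u j = v := by
  classical
  set K : Set Y := {z | ∃ lam : ι → ℝ, (∀ j, 0 ≤ lam j) ∧ ∑ j, lam j • u j = z} with hK
  set S : Finset ι → Set Y := fun t =>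
    {z | LinearIndependent ℝ (fun j : t => u j) ∧
      ∃ mu : ι → ℝ, (∀ j ∈ t, 0 ≤ mu j) ∧ ∑ j ∈ t, mu j • u j = z} with hS
  have hKU : K = ⋃ t : Finset ι, S t := by
    ext z
    constructor
    · rintro ⟨lam, hlam0, hlamsum⟩
      obtain ⟨t, -, hLI, mu, hmu0, hmusum⟩ :=
        cone_caratheodory u (Finset.univ.card) Finset.univ rfl lam (fun j _ => hlam0 j)
      exact Set.mem_iUnion.mpr ⟨t, hLI, mu, hmu0, hmusum.trans hlamsum⟩
    · intro hz
      obtain ⟨t, hLI, mu, hmu0, hmusum⟩ := Set.mem_iUnion.mp hz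
      refine ⟨fun j => if j ∈ t then mu j else 0, fun j => ?_, ?_⟩
      · by_cases h : j ∈ t
        · simpa [h] using hmu0 j h
        · simp [h]
      · rw [← hmusum]
        simp only [ite_smul, zero_smul]
        rw [Finset.sum_ite_mem, Finset.univ_inter]
  have hSclosed : ∀ t : Finset ι, IsClosed (S t) := by
    intro t
    by_cases hLI : LinearIndependent ℝ (fun j : t => u j)
    · have himg : S t = (sumSmulMap (fun j : t => u (j : ι))) ''
          {m : t → ℝ | ∀ j, 0 ≤ m j} := by
        ext z
        constructor
        · rintro ⟨-, mu, hmu0, hmusum⟩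
          refine ⟨fun j => mu j, fun j => hmu0 j j.2, ?_⟩
          show ∑ j : t, mu (j : ι) • u (j : ι) = z
          rw [← hmusum]
          exact (Finset.sum_attach t (fun j => mu j • u j))
        · rintro ⟨m, hm0, hmz⟩
          refine ⟨hLI, fun j => if h : j ∈ t then m ⟨j, h⟩ else 0, fun j hj => by simpa [hj] using hm0 ⟨j, hj⟩, ?_⟩
          rw [← hmz]
          show _ = ∑ j : t, m j • u (j : ι)
          rw [← Finset.sum_attach t (fun j => (if h : j ∈ t then m ⟨j, h⟩ else 0) • u j)]
          exact Finset.sum_congr rfl fun j _ => by simp [j.2]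
      rw [himg]
      have hker := sumSmulMap_ker (u := fun j : t => u (j : ι)) hLI
      have hce := LinearMap.isClosedEmbedding_of_injective hker
      refine hce.isClosedMap _ ?_
      have : {m : t → ℝ | ∀ j, 0 ≤ m j} = ⋂ j : t, {m : t → ℝ | 0 ≤ m j} :=
        Set.setOf_forall _
      rw [this]
      exact isClosed_iInter fun j => isClosed_le continuous_const (continuous_apply j)
    · have : S t = ∅ := by
        ext z; simp [hS, hLI]
      rw [this]; exact isClosed_empty
  have hKclosed : IsClosed K := by
    rw [hKU]; exact isClosed_iUnion_of_finite hSclosed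
  have hKconvex : Convex ℝ K := by
    rintro z1 ⟨l1, h1, e1⟩ z2 ⟨l2, h2, e2⟩ a b ha hb hab
    refine ⟨fun j => a * l1 j + b * l2 j,
      fun j => add_nonneg (mul_nonneg ha (h1 j)) (mul_nonneg hb (h2 j)), ?_⟩
    simp only [add_smul, mul_smul, Finset.sum_add_distrib, ← Finset.smul_sum, e1, e2]
  have hvK : v ∈ K := by
    by_contra hvK
    obtain ⟨f, c, hfc, hcv⟩ := geometric_hahn_banach_closed_point hKconvex hKclosed hvK
    have h0K : (0 : Y) ∈ K := ⟨fun _ => 0, fun _ => le_refl _, by simp⟩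
    have hc0 : 0 < c := by simpa using hfc 0 h0K
    have hfK : ∀ z ∈ K, f z ≤ 0 := by
      intro z hz
      by_contra hfz
      push_neg at hfz
      obtain ⟨n, hn⟩ := exists_nat_gt (c / f z)
      have hnz : (n : ℝ) • z ∈ K := by
        obtain ⟨lam, hlam0, hlamsum⟩ := hz
        exact ⟨fun j => (n : ℝ) * lam j, fun j => mul_nonneg (Nat.cast_nonneg n) (hlam0 j),
          by simp only [mul_smul, ← Finset.smul_sum, hlamsum]⟩
      have := hfc _ hnz
      rw [map_smul] at this
      have : c < (n : ℝ) * f z := by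
        rw [div_lt_iff₀ hfz] at hn; linarith
      simp only [smul_eq_mul] at *
      linarith [hfc _ hnz]
    set d : Y := (InnerProductSpace.toDual ℝ Y).symm f with hd
    have hdapp : ∀ x : Y, ⟪d, x⟫ = f x := fun x => InnerProductSpace.toDual_symm_apply
    have hud : ∀ j, ⟪u j, d⟫ ≤ 0 := by
      intro j
      rw [real_inner_comm, hdapp]
      refine hfK _ ⟨fun i => if i = j then 1 else 0, fun i => by positivity, ?_⟩
      simp [ite_smul]
    have := hv d hud
    rw [real_inner_comm, hdapp] at this
    linarith
  rw [hKU] at hvK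
  obtain ⟨t, hLI, mu, hmu0, hmusum⟩ := Set.mem_iUnion.mp hvK
  exact ⟨t, mu, hLI, hmu0, hmusum⟩
end Farkas


section Hoffman
variable {Y : Type*} [NormedAddCommGroup Y] [InnerProductSpace ℝ Y] [FiniteDimensional ℝ Y]

lemma sum_le_of_linearIndependent {ι : Type*} [Fintype ι] {u : ι → Y}
    (hLI : LinearIndependent ℝ u) :
    ∃ C : ℝ, 0 ≤ C ∧ ∀ mu : ι → ℝ, |∑ j, mu j| ≤ C * ‖∑ j, mu j • u j‖ := by
  classical
  set T := sumSmulMap u with hT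
  have hker := sumSmulMap_ker hLI
  have hinj : Function.Injective T := LinearMap.ker_eq_bot.mp hker
  set e := LinearEquiv.ofInjective T hinj with he
  set σ : (ι → ℝ) →ₗ[ℝ] ℝ :=
    { toFun := fun mu => ∑ j, mu j
      map_add' := by intros; simp [Finset.sum_add_distrib]
      map_smul' := by intros; simp [Finset.mul_sum] } with hσ
  set φ : (LinearMap.range T) →ₗ[ℝ] ℝ := σ ∘ₗ (e.symm : LinearMap.range T →ₗ[ℝ] (ι → ℝ)) with hφ
  set φc := LinearMap.toContinuousLinearMap φ with hφc
  refine ⟨‖φc‖, ContinuousLinearMap.opNorm_nonneg _, fun mu => ?_⟩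
  have hmem : T mu ∈ LinearMap.range T := LinearMap.mem_range_self T mu
  have hesymm : e.symm ⟨T mu, hmem⟩ = mu := by
    apply e.injective
    rw [LinearEquiv.apply_symm_apply]
    exact Subtype.ext rfl
  have h1 : φc ⟨T mu, hmem⟩ = ∑ j, mu j := by
    show φ ⟨T mu, hmem⟩ = ∑ j, mu j
    rw [hφ]
    simp only [LinearMap.coe_comp, Function.comp_apply, LinearEquiv.coe_coe]
    rw [hesymm]
    rfl
  calc |∑ j, mu j| = ‖φc ⟨T mu, hmem⟩‖ := by rw [h1]; exact (Real.norm_eq_abs _).symm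
    _ ≤ ‖φc‖ * ‖(⟨T mu, hmem⟩ : LinearMap.range T)‖ := φc.le_opNorm _
    _ = ‖φc‖ * ‖∑ j, mu j • u j‖ := rfl

lemma hoffman (k : ℕ) (h : Fin k → Y →ₗ[ℝ] ℝ) :
    ∃ c > (0 : ℝ), ∀ (b : Fin k → ℝ) (s : ℝ), 0 ≤ s → ∀ y : Y,
      (Set.Nonempty {z : Y | ∀ j, h j z ≤ b j}) → (∀ j, h j y ≤ b j + s) →
      ∃ y', (∀ j, h j y' ≤ b j) ∧ ‖y - y'‖ ≤ c * s := by
  classical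
  set u : Fin k → Y := fun j => (InnerProductSpace.toDual ℝ Y).symm
    ((h j).toContinuousLinearMap) with hudef
  have hu : ∀ j z, ⟪u j, z⟫ = h j z := by
    intro j z
    rw [hudef]
    exact InnerProductSpace.toDual_symm_apply
  have hCt : ∀ t : Finset (Fin k), ∃ C, 0 ≤ C ∧
      (LinearIndependent ℝ (fun j : t => u j) → ∀ mu : t → ℝ,
        |∑ j, mu j| ≤ C * ‖∑ j : t, mu j • u (j : Fin k)‖) := by
    intro t
    by_cases hLI : LinearIndependent ℝ (fun j : t => u j)
    · obtain ⟨C, hC0, hC⟩ := sum_le_of_linearIndependent hLI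
      exact ⟨C, hC0, fun _ => hC⟩
    · exact ⟨0, le_refl _, fun hLI' => absurd hLI' hLI⟩
  choose Cf hCf0 hCfb using hCt
  set c : ℝ := (∑ t : Finset (Fin k), Cf t) + 1 with hc
  have hsumnn : 0 ≤ ∑ t : Finset (Fin k), Cf t :=
    Finset.sum_nonneg fun t _ => hCf0 t
  have hc0 : 0 < c := by rw [hc]; linarith
  have hcge : ∀ t : Finset (Fin k), Cf t ≤ c := by
    intro t
    have := Finset.single_le_sum (f := Cf) (fun i _ => hCf0 i) (Finset.mem_univ t)
    rw [hc]; linarith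
  refine ⟨c, hc0, ?_⟩
  intro b s hs y hne hy
  set P : Set Y := {z | ∀ j, h j z ≤ b j} with hP
  have hPconv : Convex ℝ P := by
    intro p hp q hq a a' ha ha' haa
    intro j
    have : h j (a • p + a' • q) = a * h j p + a' * h j q := by
      simp [map_add, map_smul, smul_eq_mul]
    rw [this]
    calc a * h j p + a' * h j q ≤ a * b j + a' * b j :=
          add_le_add (mul_le_mul_of_nonneg_left (hp j) ha)
            (mul_le_mul_of_nonneg_left (hq j) ha')
      _ = b j := by rw [← add_mul, haa, one_mul]
  have hPclosed : IsClosed P := by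
    have : P = ⋂ j, {z : Y | h j z ≤ b j} := Set.setOf_forall _
    rw [this]
    exact isClosed_iInter fun j =>
      isClosed_le (h j).continuous_of_finiteDimensional continuous_const
  obtain ⟨ys, hysP, hproj⟩ :=
    exists_norm_eq_iInf_of_complete_convex hne hPclosed.isComplete hPconv y
  have hvar : ∀ w ∈ P, ⟪y - ys, w - ys⟫ ≤ 0 :=
    (norm_eq_iInf_iff_real_inner_le_zero hPconv hysP).mp hproj
  set v : Y := y - ys with hv
  set J : Finset (Fin k) := Finset.univ.filter (fun j => b j ≤ h j ys) with hJ
  have hact : ∀ j ∈ J, h j ys = b j := fun j hj =>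
    le_antisymm (hysP j) ((Finset.mem_filter.mp hj).2)
  have hNC : ∀ d : Y, (∀ j ∈ J, ⟪u j, d⟫ ≤ 0) → ⟪v, d⟫ ≤ 0 := by
    intro d hd
    have hev : ∀ j : Fin k, ∀ᶠ t : ℝ in nhdsWithin 0 (Set.Ioi 0),
        h j (ys + t • d) ≤ b j := by
      intro j
      by_cases hj : j ∈ J
      · refine eventually_nhdsWithin_of_forall ?_
        intro t ht
        have hexp : h j (ys + t • d) = b j + t * (h j d) := by
          rw [map_add, map_smul, hact j hj, smul_eq_mul]
        have hd0 : h j d ≤ 0 := by rw [← hu]; exact hd j hj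
        have ht0 : (0:ℝ) < t := ht
        nlinarith [hexp]
      · have hj' : h j ys < b j :=
          lt_of_le_of_ne (hysP j) (fun hEq => hj (Finset.mem_filter.mpr
            ⟨Finset.mem_univ j, le_of_eq hEq.symm⟩))
        have hcont : ContinuousAt (fun t : ℝ => h j (ys + t • d)) 0 :=
          ((h j).continuous_of_finiteDimensional.comp
            (continuous_const.add (continuous_id.smul continuous_const))).continuousAt
        have h0mem : (fun t : ℝ => h j (ys + t • d)) 0 ∈ Set.Iio (b j) := by
          simpa using hj'
        have := hcont.eventually_mem (isOpen_Iio.mem_nhds h0mem)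
        exact (this.filter_mono nhdsWithin_le_nhds).mono fun t ht => le_of_lt ht
    have hall : ∀ᶠ t : ℝ in nhdsWithin 0 (Set.Ioi 0),
        ∀ j, h j (ys + t • d) ≤ b j := Filter.eventually_all.mpr hev
    obtain ⟨t, htP, ht0⟩ := (hall.and eventually_mem_nhdsWithin).exists
    have hmemP : ys + t • d ∈ P := htP
    have := hvar _ hmemP
    have hsimp : ⟪v, ys + t • d - ys⟫ = t * ⟪v, d⟫ := by
      rw [add_sub_cancel_left, real_inner_smul_right]
    rw [hsimp] at this
    have ht0' : (0:ℝ) < t := ht0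
    nlinarith
  set u' : Fin k → Y := fun j => if j ∈ J then u j else 0 with hu'
  have hv' : ∀ d : Y, (∀ j, ⟪u' j, d⟫ ≤ 0) → ⟪v, d⟫ ≤ 0 := by
    intro d hd
    exact hNC d fun j hj => by simpa [hu', hj] using hd j
  obtain ⟨t, mu, hLI', hmu0, hmusum⟩ := farkas_cone u' v hv'
  have htJ : ∀ j ∈ t, j ∈ J := by
    intro j hj
    by_contra hjJ
    have := hLI'.ne_zero ⟨j, hj⟩
    simp [hu', hjJ] at this
  have hfams : (fun j : t => u' (j : Fin k)) = fun j : t => u (j : Fin k) :=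
    funext fun j => by simp [hu', htJ j j.2]
  have hLI : LinearIndependent ℝ (fun j : t => u (j : Fin k)) := hfams ▸ hLI'
  have hms : ∑ j ∈ t, mu j • u j = v := by
    rw [← hmusum]
    exact Finset.sum_congr rfl fun j hj => by simp [hu', htJ j hj]
  have hineq : ∀ j ∈ t, ⟪u j, v⟫ ≤ s := by
    intro j hj
    have h1 : ⟪u j, v⟫ = h j y - h j ys := by rw [hu, hv, map_sub]
    rw [h1, hact j (htJ j hj)]
    linarith [hy j]
  have hvv : ⟪v, v⟫ = ∑ j ∈ t, mu j * ⟪u j, v⟫ := by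
    nth_rewrite 1 [← hms]
    rw [sum_inner]
    exact Finset.sum_congr rfl fun j _ => real_inner_smul_left _ _ _
  have key : ⟪v, v⟫ ≤ (∑ j ∈ t, mu j) * s := by
    rw [hvv, Finset.sum_mul]
    exact Finset.sum_le_sum fun j hj =>
      mul_le_mul_of_nonneg_left (hineq j hj) (hmu0 j hj)
  have hsum_le : ∑ j ∈ t, mu j ≤ Cf t * ‖v‖ := by
    have h1 : ∑ j ∈ t, mu j = ∑ j : t, mu (j : Fin k) :=
      (Finset.sum_attach t mu).symm
    have h2 : ∑ j ∈ t, mu j • u j = ∑ j : t, mu (j : Fin k) • u (j : Fin k) :=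
      (Finset.sum_attach t (fun j => mu j • u j)).symm
    calc ∑ j ∈ t, mu j ≤ |∑ j : t, mu (j : Fin k)| := h1 ▸ le_abs_self _
      _ ≤ Cf t * ‖∑ j : t, mu (j : Fin k) • u (j : Fin k)‖ := hCfb t hLI _
      _ = Cf t * ‖v‖ := by rw [← h2, hms]
  have hnorm2 : ‖v‖ * ‖v‖ ≤ (Cf t * ‖v‖) * s := by
    rw [← real_inner_self_eq_norm_mul_norm]
    exact key.trans (mul_le_mul_of_nonneg_right hsum_le hs)
  refine ⟨ys, hysP, ?_⟩
  show ‖v‖ ≤ c * s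
  rcases eq_or_lt_of_le (norm_nonneg v) with h0 | h0
  · rw [← h0]
    positivity
  · have h3 : ‖v‖ ≤ Cf t * s := by nlinarith
    exact h3.trans (mul_le_mul_of_nonneg_right (hcge t) hs)

end Hoffman


section Sections
variable {X Y : Type*} [NormedAddCommGroup X] [InnerProductSpace ℝ X] [FiniteDimensional ℝ X]
  [NormedAddCommGroup Y] [InnerProductSpace ℝ Y] [FiniteDimensional ℝ Y]

lemma section_lipschitz (k : ℕ) (f : Fin k → (X × Y) →ₗ[ℝ] ℝ) (b : Fin k → ℝ) :
    ∃ c > (0:ℝ), ∀ x x' : X, (∃ y0, ∀ j, f j (x', y0) ≤ b j) →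
      ∀ y : Y, (∀ j, f j (x, y) ≤ b j) →
      ∃ y', (∀ j, f j (x', y') ≤ b j) ∧ ‖y - y'‖ ≤ c * ‖x - x'‖ := by
  classical
  set g : Fin k → X →ₗ[ℝ] ℝ := fun j => (f j).comp (LinearMap.inl ℝ X Y) with hg
  set hY : Fin k → Y →ₗ[ℝ] ℝ := fun j => (f j).comp (LinearMap.inr ℝ X Y) with hhY
  have hsplit : ∀ (j : Fin k) (x : X) (y : Y), f j (x, y) = g j x + hY j y := by
    intro j x y
    have hxy : (x, y) = ((x, (0:Y)) + ((0:X), y)) := by simp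
    rw [hxy, map_add]; rfl
  obtain ⟨c0, hc00, hc0⟩ := hoffman k hY
  set M : ℝ := (∑ j, ‖(g j).toContinuousLinearMap‖) + 1 with hM
  have hsum0 : 0 ≤ ∑ j, ‖(g j).toContinuousLinearMap‖ :=
    Finset.sum_nonneg fun j _ => norm_nonneg _
  have hM0 : 0 < M := by rw [hM]; linarith
  have hMj : ∀ j, ‖(g j).toContinuousLinearMap‖ ≤ M := by
    intro j
    have := Finset.single_le_sum (f := fun j => ‖(g j).toContinuousLinearMap‖)
      (fun i _ => norm_nonneg _) (Finset.mem_univ j)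
    rw [hM]; linarith
  refine ⟨c0 * M, mul_pos hc00 hM0, ?_⟩
  rintro x x' ⟨y0, hy0⟩ y hyx
  have hne : Set.Nonempty {z : Y | ∀ j, hY j z ≤ b j - g j x'} :=
    ⟨y0, fun j => by have := hy0 j; rw [hsplit] at this; linarith⟩
  have hs0 : (0:ℝ) ≤ M * ‖x - x'‖ := mul_nonneg hM0.le (norm_nonneg _)
  have hviol : ∀ j, hY j y ≤ (b j - g j x') + M * ‖x - x'‖ := by
    intro j
    have h1 := hyx j
    rw [hsplit] at h1
    have h2 : g j x' - g j x ≤ M * ‖x - x'‖ := by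
      have h3 : g j x' - g j x = (g j).toContinuousLinearMap (x' - x) := by
        rw [map_sub]; rfl
      rw [h3]
      calc (g j).toContinuousLinearMap (x' - x)
          ≤ ‖(g j).toContinuousLinearMap (x' - x)‖ := le_abs_self _
        _ ≤ ‖(g j).toContinuousLinearMap‖ * ‖x' - x‖ :=
            (g j).toContinuousLinearMap.le_opNorm _
        _ ≤ M * ‖x - x'‖ := by
            rw [norm_sub_rev]
            exact mul_le_mul_of_nonneg_right (hMj j) (norm_nonneg _)
    linarith
  obtain ⟨y', hy', hdist⟩ := hc0 (fun j => b j - g j x') (M * ‖x - x'‖) hs0 y hne hviol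
  refine ⟨y', fun j => by have := hy' j; rw [hsplit]; linarith, ?_⟩
  rw [mul_assoc]
  exact hdist

lemma sections_empty_near (k : ℕ) (f : Fin k → (X × Y) →ₗ[ℝ] ℝ) (b : Fin k → ℝ) (xb : X)
    (hempty : ¬ ∃ y : Y, ∀ j, f j (xb, y) ≤ b j) :
    ∃ ε > (0:ℝ), ∀ x : X, ‖x - xb‖ ≤ ε → ¬ ∃ y : Y, ∀ j, f j (x, y) ≤ b j := by
  classical
  by_contra hcon
  push_neg at hcon
  obtain ⟨c, hc0, hlip⟩ := section_lipschitz k f b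
  have hseq : ∀ n : ℕ, ∃ x : X, ‖x - xb‖ ≤ 1/(n+1 : ℝ) ∧ ∃ y : Y, ∀ j, f j (x, y) ≤ b j := by
    intro n
    obtain ⟨x, hx, hy⟩ := hcon (1/(n+1 : ℝ)) (by positivity)
    exact ⟨x, hx, hy⟩
  choose xs hxs ys hys using hseq
  have hsel : ∀ n, ∃ z : Y, (∀ j, f j (xs n, z) ≤ b j) ∧ ‖ys 0 - z‖ ≤ c * ‖xs 0 - xs n‖ :=
    fun n => hlip (xs 0) (xs n) ⟨ys n, hys n⟩ (ys 0) (hys 0)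
  choose zs hzs hzb using hsel
  have hxsb : ∀ n : ℕ, ‖xs n - xb‖ ≤ 1 := by
    intro n
    refine (hxs n).trans ?_
    rw [div_le_one (by positivity)]
    have : (0:ℝ) ≤ (n:ℝ) := Nat.cast_nonneg n
    linarith
  have hxbnd : ∀ n, ‖xs 0 - xs n‖ ≤ 2 := by
    intro n
    calc ‖xs 0 - xs n‖ = ‖(xs 0 - xb) + (xb - xs n)‖ := by abel_nf
      _ ≤ ‖xs 0 - xb‖ + ‖xb - xs n‖ := norm_add_le _ _
      _ ≤ 1 + 1 := add_le_add (hxsb 0) (by rw [norm_sub_rev]; exact hxsb n)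
      _ = 2 := by norm_num
  set R : ℝ := ‖ys 0‖ + c * 2 with hR
  have hzbnd : ∀ n, zs n ∈ Metric.closedBall (0:Y) R := by
    intro n
    rw [Metric.mem_closedBall, dist_zero_right]
    have h1 := hzb n
    have h2 : c * ‖xs 0 - xs n‖ ≤ c * 2 := mul_le_mul_of_nonneg_left (hxbnd n) hc0.le
    have h3 : ‖zs n‖ - ‖ys 0‖ ≤ ‖zs n - ys 0‖ := norm_sub_norm_le _ _
    rw [norm_sub_rev] at h3
    rw [hR]; linarith
  obtain ⟨a, -, φ, hφmono, hφtend⟩ :=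
    tendsto_subseq_of_bounded Metric.isBounded_closedBall hzbnd
  have hxtend : Filter.Tendsto (fun n => xs (φ n)) Filter.atTop (nhds xb) := by
    rw [tendsto_iff_norm_sub_tendsto_zero]
    refine squeeze_zero (fun n => norm_nonneg _) (fun n => (hxs (φ n)).trans ?_)
      tendsto_one_div_add_atTop_nhds_zero_nat
    have h4 : (n:ℝ) + 1 ≤ (φ n : ℝ) + 1 := by
      have h5 : n ≤ φ n := hφmono.le_apply
      have h6 : (n:ℝ) ≤ (φ n : ℝ) := Nat.cast_le.mpr h5
      linarith
    exact one_div_le_one_div_of_le (by positivity) h4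
  have hpair : Filter.Tendsto (fun n => (xs (φ n), zs (φ n))) Filter.atTop (nhds (xb, a)) :=
    hxtend.prodMk_nhds hφtend
  have hCclosed : IsClosed {p : X × Y | ∀ j, f j p ≤ b j} := by
    have : {p : X × Y | ∀ j, f j p ≤ b j} = ⋂ j, {p : X × Y | f j p ≤ b j} :=
      Set.setOf_forall _
    rw [this]
    exact isClosed_iInter fun j =>
      isClosed_le (f j).continuous_of_finiteDimensional continuous_const
  have hmem : (xb, a) ∈ {p : X × Y | ∀ j, f j p ≤ b j} :=
    hCclosed.mem_of_tendsto hpair (Filter.Eventually.of_forall fun n => hzs (φ n))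
  exact hempty ⟨a, hmem⟩

end Sections

/-- Robinson's theorem: a set-valued polyhedral mapping (one whose graph is a finite
union of polyhedral convex sets) is locally upper Lipschitz at every point of its graph:
`F(x) ⊆ F(x̄) + κ‖x − x̄‖ B` for all `x` near `x̄`. -/
theorem polyhedral_multifunction_locally_upper_lipschitz
    {X Y : Type*} [NormedAddCommGroup X] [InnerProductSpace ℝ X] [FiniteDimensional ℝ X]
    [NormedAddCommGroup Y] [InnerProductSpace ℝ Y] [FiniteDimensional ℝ Y]
    (F : X → Set Y)
    (hpoly : ∃ (k : ℕ) (C : Fin k → Set (X × Y)),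
      (∀ i, IsPolyhedral (C i)) ∧ (∀ i, Convex ℝ (C i)) ∧
      {p : X × Y | p.2 ∈ F p.1} = ⋃ i, C i)
    (xb : X) (yb : Y) (hgph : yb ∈ F xb) :
    ∃ κ > (0 : ℝ), ∃ ε > (0 : ℝ), ∀ x : X, ‖x - xb‖ ≤ ε →
      ∀ y ∈ F x, ∃ y' ∈ F xb, ‖y - y'‖ ≤ κ * ‖x - xb‖ := by
  classical
  obtain ⟨k, C, hCpoly, -, hgraph⟩ := hpoly
  choose m f b hfb using hCpoly
  have hxbyb : (xb, yb) ∈ ⋃ i, C i := by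
    rw [← hgraph]; exact hgph
  obtain ⟨i₀, hi₀⟩ := Set.mem_iUnion.mp hxbyb
  have hlipex : ∀ i, ∃ c > (0:ℝ), ∀ x x' : X, (∃ y0, ∀ j, f i j (x', y0) ≤ b i j) →
      ∀ y : Y, (∀ j, f i j (x, y) ≤ b i j) →
      ∃ y', (∀ j, f i j (x', y') ≤ b i j) ∧ ‖y - y'‖ ≤ c * ‖x - x'‖ :=
    fun i => section_lipschitz (m i) (f i) (b i)
  choose cs hcs0 hcs using hlipex
  have hradex : ∀ i, ∃ ε > (0:ℝ), (¬ ∃ y, (xb, y) ∈ C i) →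
      ∀ x, ‖x - xb‖ ≤ ε → ¬ ∃ y, (x, y) ∈ C i := by
    intro i
    by_cases hi : ∃ y, (xb, y) ∈ C i
    · exact ⟨1, one_pos, fun h => absurd hi h⟩
    · have hempty : ¬ ∃ y, ∀ j, f i j (xb, y) ≤ b i j := by
        rw [hfb i] at hi
        exact hi
      obtain ⟨ε, hε0, hε⟩ := sections_empty_near (m i) (f i) (b i) xb hempty
      refine ⟨ε, hε0, fun _ x hx => ?_⟩
      rw [hfb i]
      exact hε x hx
  choose es hes0 hes using hradex
  set κ : ℝ := (∑ i, cs i) + 1 with hκ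
  have hsumnn : 0 ≤ ∑ i, cs i := Finset.sum_nonneg fun i _ => (hcs0 i).le
  have hκ0 : 0 < κ := by rw [hκ]; linarith
  have hκge : ∀ i, cs i ≤ κ := by
    intro i
    have := Finset.single_le_sum (f := cs) (fun i _ => (hcs0 i).le) (Finset.mem_univ i)
    rw [hκ]; linarith
  have hU : (Finset.univ : Finset (Fin k)).Nonempty := ⟨i₀, Finset.mem_univ _⟩
  set ε : ℝ := Finset.univ.inf' hU es with hεdef
  have hε0 : 0 < ε := by
    rw [hεdef, Finset.lt_inf'_iff]
    exact fun i _ => hes0 i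
  refine ⟨κ, hκ0, ε, hε0, ?_⟩
  intro x hx y hy
  have hxy : (x, y) ∈ ⋃ i, C i := by
    rw [← hgraph]; exact hy
  obtain ⟨i, hi⟩ := Set.mem_iUnion.mp hxy
  by_cases hsec : ∃ y0, (xb, y0) ∈ C i
  · obtain ⟨y0, hy0⟩ := hsec
    have hy0' : ∀ j, f i j (xb, y0) ≤ b i j := by rw [hfb i] at hy0; exact hy0
    have hi' : ∀ j, f i j (x, y) ≤ b i j := by rw [hfb i] at hi; exact hi
    obtain ⟨y', hy'mem, hy'dist⟩ := hcs i x xb ⟨y0, hy0'⟩ y hi'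
    have hy'C : (xb, y') ∈ C i := by rw [hfb i]; exact hy'mem
    have hy'F : y' ∈ F xb := by
      have : (xb, y') ∈ {p : X × Y | p.2 ∈ F p.1} := by
        rw [hgraph]; exact Set.mem_iUnion.mpr ⟨i, hy'C⟩
      exact this
    exact ⟨y', hy'F, hy'dist.trans (mul_le_mul_of_nonneg_right (hκge i) (norm_nonneg _))⟩
  · exfalso
    have hxε : ‖x - xb‖ ≤ es i := hx.trans (Finset.inf'_le es (Finset.mem_univ i))
    exact hes i hsec x hxε ⟨y, hi⟩
end
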